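/- arXiv:2205.11312 — 5 statements merged into one kernel-verified Lean document; each statement's English description precedes it below -/
import Mathlib

section
/- Let D be an integral domain with quotient field K, let T be a flat overring of D, and let f ∈ K[X]. Then the T-submodule of K generated by f(D) = {f(d) : d ∈ D} equals the T-submodule of K generated by f(T) = {f(t) : t ∈ T}; that is, f(D)T = f(T)T. -/
open Polynomial

section Preliminaries

variable {K : Type*} [Field K]


/-- The ring `Int(D)` of integer-valued polynomials on a subring `D` of `K`. -/
def intPoly (D : Subring K) : Subring (Polynomial K) where
  carrier := {f : Polynomial K | ∀ d ∈ D, f.eval d ∈ D}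
  mul_mem' := fun {f g} hf hg d hd => by
    simpa [Polynomial.eval_mul] using mul_mem (hf d hd) (hg d hd)
  one_mem' := fun d hd => by simpa using one_mem D
  add_mem' := fun {f g} hf hg d hd => by
    simpa [Polynomial.eval_add] using add_mem (hf d hd) (hg d hd)
  zero_mem' := fun d hd => by simpa using zero_mem D
  neg_mem' := fun {f} hf d hd => by
    simpa [Polynomial.eval_neg] using neg_mem (hf d hd)

@[simp] lemma mem_intPoly {D : Subring K} {f : Polynomial K} :
    f ∈ intPoly D ↔ ∀ d ∈ D, f.eval d ∈ D := Iff.rfl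

lemma smul_poly_eq_C_mul (T : Subring K) (t : ↥T) (p : Polynomial K) :
    t • p = Polynomial.C (t : K) * p := by
  rw [Subring.smul_def, Polynomial.smul_eq_C_mul]

/-- `Int(D)T` : the `T`-submodule of `K[X]` generated by `Int(D)`, which is a subring. -/
def intMul (D T : Subring K) : Subring (Polynomial K) where
  carrier := (Submodule.span ↥T ((intPoly D : Set (Polynomial K))) : Set (Polynomial K))
  zero_mem' := Submodule.zero_mem _
  add_mem' := fun h1 h2 => Submodule.add_mem _ h1 h2
  neg_mem' := fun h => Submodule.neg_mem _ h
  one_mem' := Submodule.subset_span (one_mem (intPoly D))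
  mul_mem' := by
    intro p q hp hq
    simp only [SetLike.mem_coe] at *
    induction hp using Submodule.span_induction with
    | mem x hx =>
      induction hq using Submodule.span_induction with
      | mem y hy => exact Submodule.subset_span (mul_mem hx hy)
      | zero => simpa using Submodule.zero_mem _
      | add y z _ _ hy hz => rw [mul_add]; exact Submodule.add_mem _ hy hz
      | smul t y _ hy =>
        rw [smul_poly_eq_C_mul, ← mul_assoc, mul_comm x (Polynomial.C (t:K)), mul_assoc,
          ← smul_poly_eq_C_mul]
        exact Submodule.smul_mem _ t hy
    | zero => simpa using Submodule.zero_mem _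
    | add y z _ _ hy hz => rw [add_mul]; exact Submodule.add_mem _ hy hz
    | smul t y _ hy =>
      rw [smul_poly_eq_C_mul, mul_assoc, ← smul_poly_eq_C_mul]
      exact Submodule.smul_mem _ t hy

lemma mem_intMul {D T : Subring K} {f : Polynomial K} :
    f ∈ intMul D T ↔ f ∈ Submodule.span ↥T ((intPoly D : Set (Polynomial K))) := Iff.rfl

lemma intPoly_le_intMul (D T : Subring K) : intPoly D ≤ intMul D T :=
  fun _ hf => Submodule.subset_span hf



/-- The localization `D_M` of `D` at a prime ideal `M`, as a subring of `K` (an overring). -/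
def locAt (D : Subring K) (M : Ideal ↥D) [hM : M.IsPrime] : Subring K where
  carrier := {x : K | ∃ d s : ↥D, s ∉ M ∧ (s : K) * x = (d : K)}
  zero_mem' := ⟨0, 1, (Ideal.ne_top_iff_one M).mp hM.ne_top, by simp⟩
  one_mem' := ⟨1, 1, (Ideal.ne_top_iff_one M).mp hM.ne_top, by simp⟩
  add_mem' := by
    rintro x y ⟨d, s, hs, hsx⟩ ⟨e, t, ht, hty⟩
    refine ⟨d * t + e * s, s * t, fun h => ?_, ?_⟩
    · rcases hM.mem_or_mem h with h | h
      exacts [hs h, ht h]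
    · push_cast
      calc (s:K) * (t:K) * (x + y) = (t:K) * ((s:K) * x) + (s:K) * ((t:K) * y) := by ring
      _ = (d:K) * (t:K) + (e:K) * (s:K) := by rw [hsx, hty]; ring
  neg_mem' := by
    rintro x ⟨d, s, hs, hsx⟩
    exact ⟨-d, s, hs, by push_cast; rw [mul_neg, hsx]⟩
  mul_mem' := by
    rintro x y ⟨d, s, hs, hsx⟩ ⟨e, t, ht, hty⟩
    refine ⟨d * e, s * t, fun h => ?_, ?_⟩
    · rcases hM.mem_or_mem h with h | h
      exacts [hs h, ht h]
    · push_cast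
      calc (s:K) * (t:K) * (x * y) = ((s:K)*x) * ((t:K)*y) := by ring
      _ = (d:K) * (e:K) := by rw [hsx, hty]

lemma le_locAt (D : Subring K) (M : Ideal ↥D) [hM : M.IsPrime] : D ≤ locAt D M := by
  intro x hx
  exact ⟨⟨x, hx⟩, 1, (Ideal.ne_top_iff_one M).mp hM.ne_top, by simp⟩

/-- The conductor ideal `(D :_D f(D))` of an integer-valued-polynomial candidate. -/
def condIdeal (D : Subring K) (f : Polynomial K) : Ideal ↥D where
  carrier := {d : ↥D | ∀ c ∈ D, (d : K) * f.eval c ∈ D}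
  zero_mem' := fun c _ => by simpa using zero_mem D
  add_mem' := fun {a b} ha hb c hc => by
    have := add_mem (ha c hc) (hb c hc)
    simpa [add_mul] using this
  smul_mem' := fun r d hd c hc => by
    have := mul_mem r.2 (hd c hc)
    simpa [mul_assoc] using this

/-- The conductor `(T :_T f(D)T)`. -/
def condIdealT (D T : Subring K) (f : Polynomial K) : Ideal ↥T where
  carrier := {t : ↥T | ∀ c ∈ D, (t : K) * f.eval c ∈ T}
  zero_mem' := fun c _ => by simpa using zero_mem T
  add_mem' := fun {a b} ha hb c hc => by
    have := add_mem (ha c hc) (hb c hc)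
    simpa [add_mul] using this
  smul_mem' := fun r t ht c hc => by
    have := mul_mem r.2 (ht c hc)
    simpa [mul_assoc] using this

end Preliminaries

section CG

variable {A B : Type*} [CommRing A] [IsDomain A] [CommRing B] [IsDomain B]

lemma nonZeroDivisors_le_comap_of_injective (f : A →+* B) (hf : Function.Injective f) :
    nonZeroDivisors A ≤ Submonoid.comap f (nonZeroDivisors B) := by
  intro a ha
  simp only [Submonoid.mem_comap]
  refine mem_nonZeroDivisors_of_ne_zero fun h => ?_
  exact nonZeroDivisors.ne_zero ha (hf (by simpa using h))

/-- Extension of fractional ideals along an injective ring homomorphism of domains,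
as a monoid homomorphism. -/
noncomputable def extFrac (f : A →+* B) (hf : Function.Injective f) :
    FractionalIdeal (nonZeroDivisors A) (FractionRing A) →*
      FractionalIdeal (nonZeroDivisors B) (FractionRing B) where
  toFun I := I.extended (FractionRing B) (nonZeroDivisors_le_comap_of_injective f hf)
  map_one' := FractionalIdeal.extended_one _ _
  map_mul' I J := FractionalIdeal.extended_mul _ _ _ _

lemma extFrac_spanSingleton (f : A →+* B) (hf : Function.Injective f) (x : FractionRing A) :
    extFrac f hf (FractionalIdeal.spanSingleton _ x) =
      FractionalIdeal.spanSingleton _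
        (IsLocalization.map (FractionRing B) f
          (nonZeroDivisors_le_comap_of_injective f hf) x) := by
  set g := IsLocalization.map (S := FractionRing A) (FractionRing B) f
    (nonZeroDivisors_le_comap_of_injective f hf) with hg
  apply FractionalIdeal.coeToSubmodule_injective
  show ((FractionalIdeal.spanSingleton (nonZeroDivisors A) x).extended (FractionRing B)
      (nonZeroDivisors_le_comap_of_injective f hf) : Submodule B (FractionRing B)) =
    ((FractionalIdeal.spanSingleton (nonZeroDivisors B) (g x)) : Submodule B (FractionRing B))
  rw [FractionalIdeal.coe_extended_eq_span, FractionalIdeal.coe_spanSingleton]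
  apply le_antisymm
  · rw [Submodule.span_le]
    rintro _ ⟨z, hz, rfl⟩
    rw [SetLike.mem_coe, FractionalIdeal.mem_spanSingleton] at hz
    obtain ⟨a, rfl⟩ := hz
    rw [SetLike.mem_coe, Submodule.mem_span_singleton]
    refine ⟨f a, ?_⟩
    rw [Algebra.smul_def a x, map_mul, IsLocalization.map_eq, Algebra.smul_def]
  · refine Submodule.span_le.mpr (Set.singleton_subset_iff.mpr (Submodule.subset_span ?_))
    exact ⟨x, SetLike.mem_coe.mpr (FractionalIdeal.mem_spanSingleton_self _ x), rfl⟩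

/-- The extension map between class groups induced by an injective ring homomorphism of
integral domains. -/
noncomputable def mapCG (f : A →+* B) (hf : Function.Injective f) :
    ClassGroup A →* ClassGroup B := by
  refine QuotientGroup.lift _ ((ClassGroup.mk (FractionRing B)).comp (Units.map (extFrac f hf))) ?_
  intro x hx
  obtain ⟨u, rfl⟩ := hx
  rw [MonoidHom.mem_ker, MonoidHom.comp_apply, ClassGroup.mk_eq_one_iff]
  have h1 : ((Units.map (extFrac f hf : _ →* _)
        (toPrincipalIdeal A (FractionRing A) u) :
      (FractionalIdeal (nonZeroDivisors B) (FractionRing B))ˣ) :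
      FractionalIdeal (nonZeroDivisors B) (FractionRing B)) =
      extFrac f hf (toPrincipalIdeal A (FractionRing A) u) := rfl
  rw [h1, coe_toPrincipalIdeal, extFrac_spanSingleton]
  rw [FractionalIdeal.coe_spanSingleton]
  exact ⟨⟨_, rfl⟩⟩

end CG

section Homs

variable {K : Type*} [Field K]

lemma subringInclusion_injective {R : Type*} [Ring R] {A B : Subring R} (h : A ≤ B) :
    Function.Injective (Subring.inclusion h) := by
  intro a b hab
  have h2 := congrArg (Subtype.val : ↥B → R) hab
  exact Subtype.ext h2

/-- The constants map `D → Int(D)`. -/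
noncomputable def constHom (D : Subring K) : ↥D →+* ↥(intPoly D) where
  toFun d := ⟨Polynomial.C (d : K), fun c hc => by simpa using d.2⟩
  map_one' := Subtype.ext (by push_cast; simp)
  map_mul' a b := Subtype.ext (by push_cast; simp)
  map_zero' := Subtype.ext (by push_cast; simp)
  map_add' a b := Subtype.ext (by push_cast; simp)

lemma constHom_injective (D : Subring K) : Function.Injective (constHom D) := by
  intro a b hab
  have h2 := congrArg (Subtype.val : {p : Polynomial K // p ∈ _} → Polynomial K) hab
  exact Subtype.ext (Polynomial.C_injective h2)

lemma C_mem_intMul (D T : Subring K) (t : ↥T) : Polynomial.C (t : K) ∈ intMul D T := by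
  have h1 := Submodule.smul_mem (Submodule.span ↥T ((intPoly D : Set (Polynomial K)))) t
    (Submodule.subset_span (one_mem (intPoly D)))
  rwa [smul_poly_eq_C_mul, mul_one] at h1

/-- The constants map `T → Int(D)T`. -/
noncomputable def constHomMul (D T : Subring K) : ↥T →+* ↥(intMul D T) where
  toFun t := ⟨Polynomial.C (t : K), C_mem_intMul D T t⟩
  map_one' := Subtype.ext (by push_cast; simp)
  map_mul' a b := Subtype.ext (by push_cast; simp)
  map_zero' := Subtype.ext (by push_cast; simp)
  map_add' a b := Subtype.ext (by push_cast; simp)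

lemma constHomMul_injective (D T : Subring K) : Function.Injective (constHomMul D T) := by
  intro a b hab
  have h2 := congrArg (Subtype.val : ↥(intMul D T) → Polynomial K) hab
  exact Subtype.ext (Polynomial.C_injective h2)

/-- The extension map `Pic(D) → Pic(T)` for an overring `T` of `D`. -/
noncomputable def picExt {D T : Subring K} (h : D ≤ T) : ClassGroup ↥D →* ClassGroup ↥T :=
  mapCG (Subring.inclusion h) (subringInclusion_injective h)

/-- The extension map `ι_D : Pic(D) → Pic(Int(D))`. -/
noncomputable def iotaPic (D : Subring K) : ClassGroup ↥D →* ClassGroup ↥(intPoly D) :=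
  mapCG (constHom D) (constHom_injective D)

/-- The extension map `ι_{D,T} : Pic(T) → Pic(Int(D)T)`. -/
noncomputable def iotaPicMul (D T : Subring K) : ClassGroup ↥T →* ClassGroup ↥(intMul D T) :=
  mapCG (constHomMul D T) (constHomMul_injective D T)

/-- The extension map `Pic(Int(D)) → Pic(Int(D)T)`. -/
noncomputable def picIntExt (D T : Subring K) :
    ClassGroup ↥(intPoly D) →* ClassGroup ↥(intMul D T) :=
  mapCG (Subring.inclusion (intPoly_le_intMul D T))
    (subringInclusion_injective (intPoly_le_intMul D T))

/-- Transport of class groups along an equality of subrings. -/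
noncomputable def cgCongr {R : Type*} [CommRing R] [IsDomain R] {A B : Subring R} (h : A = B) :
    ClassGroup ↥A →* ClassGroup ↥B :=
  mapCG (RingEquiv.subringCongr h).toRingHom (RingEquiv.subringCongr h).injective

/-- The int-polynomial Picard group `Picpol(D) = Pic(Int(D))/ι_D(Pic(D))`. -/
noncomputable def picpol (D : Subring K) : Type _ :=
  ClassGroup ↥(intPoly D) ⧸ (iotaPic D).range

noncomputable instance (D : Subring K) : CommGroup (picpol D) :=
  QuotientGroup.Quotient.commGroup _

/-- The quotient map `Pic(Int(D)) → Picpol(D)`. -/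
noncomputable def picpolMk (D : Subring K) : ClassGroup ↥(intPoly D) →* picpol D :=
  QuotientGroup.mk' _

/-- The relative int-polynomial Picard group `Picpol(D,T) = Pic(Int(D)T)/ι_{D,T}(Pic(T))`. -/
noncomputable def picpolRel (D T : Subring K) : Type _ :=
  ClassGroup ↥(intMul D T) ⧸ (iotaPicMul D T).range

noncomputable instance (D T : Subring K) : CommGroup (picpolRel D T) :=
  QuotientGroup.Quotient.commGroup _

/-- The quotient map `Pic(Int(D)T) → Picpol(D,T)`. -/
noncomputable def picpolRelMk (D T : Subring K) :
    ClassGroup ↥(intMul D T) →* picpolRel D T :=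
  QuotientGroup.mk' _

/-- `Pic(D,Θ)`: classes of `Pic(D)` that become trivial in every `T ∈ Θ`. -/
noncomputable def picRel (D : Subring K) (Θ : Set (Subring K)) (hle : ∀ T ∈ Θ, D ≤ T) :
    Subgroup (ClassGroup ↥D) where
  carrier := {c | ∀ T, ∀ hT : T ∈ Θ, picExt (hle T hT) c = 1}
  one_mem' := fun T hT => map_one _
  mul_mem' := fun {a b} ha hb T hT => by rw [map_mul, ha T hT, hb T hT, mul_one]
  inv_mem' := fun {a} ha T hT => by rw [map_inv, ha T hT, inv_one]

/-- The subgroup of a product of groups consisting of finitely supported elements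
(the direct sum inside the direct product). -/
def finSupportSubgroup {ι : Type*} (G : ι → Type*) [∀ i, CommGroup (G i)] :
    Subgroup (Π i, G i) where
  carrier := {x | {i | x i ≠ 1}.Finite}
  one_mem' := by simp
  mul_mem' := fun {a b} ha hb => Set.Finite.subset (ha.union hb) (fun i hi => by
    by_contra h
    simp only [Set.mem_union, Set.mem_setOf_eq, not_or, not_not] at h
    exact hi (by simp [h.1, h.2]))
  inv_mem' := fun {a} ha => Set.Finite.subset ha (fun i hi => by
    simp only [Set.mem_setOf_eq, Pi.inv_apply, ne_eq, inv_eq_one] at hi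
    exact hi)

end Homs


/-- `B` is flat as an `A`-module, the module structure being induced by the
inclusion `A ≤ B` of subrings. -/
def SubringFlat {R : Type*} [CommRing R] (A B : Subring R) (h : A ≤ B) : Prop :=
  @Module.Flat ↥A ↥B _ _ (@Algebra.toModule _ _ _ _ ((Subring.inclusion h).toAlgebra))

section Families

variable {K : Type*} [Field K]

/-- A Jaffard family of the integral domain `D`. -/
structure IsJaffardFamily (D : Subring K) (Θ : Set (Subring K)) : Prop where
  le : ∀ T ∈ Θ, D ≤ T
  top : Θ = {(⊤ : Subring K)} ∨ (⊤ : Subring K) ∉ Θ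
  flat : ∀ T, ∀ hT : T ∈ Θ, SubringFlat D T (le T hT)
  complete : ∀ I : Ideal ↥D, ∀ x : ↥D,
    x ∈ I ↔ ∀ T ∈ Θ, (x : K) ∈ Submodule.span ↥T ((fun d : ↥D => (d : K)) '' (I : Set ↥D))
  independent : ∀ T ∈ Θ, ∀ T' ∈ Θ, T ≠ T' → T ⊔ T' = ⊤
  locallyFinite : ∀ x : K, x ∈ D → x ≠ 0 → {T ∈ Θ | ¬ ∃ y ∈ T, x * y = 1}.Finite

/-- A t-Jaffard family of the integral domain `D`. -/
structure IsTJaffardFamily (D : Subring K) (Θ : Set (Subring K)) : Prop where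
  le : ∀ T ∈ Θ, D ≤ T
  top : Θ = {(⊤ : Subring K)} ∨ (⊤ : Subring K) ∉ Θ
  flat : ∀ T, ∀ hT : T ∈ Θ, SubringFlat D T (le T hT)
  independent : ∀ T ∈ Θ, ∀ T' ∈ Θ, T ≠ T' → T ⊔ T' = ⊤
  locallyFinite : ∀ x : K, x ∈ D → x ≠ 0 → {T ∈ Θ | ¬ ∃ y ∈ T, x * y = 1}.Finite
  inter : ∀ x : K, x ∈ D ↔ ∀ T ∈ Θ, x ∈ T

/-- The Zariski topology on the space of subrings of `K`, whose subbasic open sets are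
`B(x) = {T ∣ x ∈ T}`. -/
def zariskiTopOverrings (K : Type*) [Field K] : TopologicalSpace (Subring K) :=
  TopologicalSpace.generateFrom {U | ∃ x : K, U = {T : Subring K | x ∈ T}}

/-- A pre-Jaffard family of the integral domain `D`. -/
structure IsPreJaffardFamily (D : Subring K) (Θ : Set (Subring K)) : Prop where
  le : ∀ T ∈ Θ, D ≤ T
  top : Θ = {(⊤ : Subring K)} ∨ (⊤ : Subring K) ∉ Θ
  flat : ∀ T, ∀ hT : T ∈ Θ, SubringFlat D T (le T hT)
  complete : ∀ I : Ideal ↥D, ∀ x : ↥D,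
    x ∈ I ↔ ∀ T ∈ Θ, (x : K) ∈ Submodule.span ↥T ((fun d : ↥D => (d : K)) '' (I : Set ↥D))
  independent : ∀ T ∈ Θ, ∀ T' ∈ Θ, T ≠ T' → T ⊔ T' = ⊤
  compact : @IsCompact (Subring K) (zariskiTopOverrings K) Θ

/-- A Jaffard overring: a member of some Jaffard family of `D`. -/
def IsJaffardOverring (D T : Subring K) : Prop :=
  ∃ Θ : Set (Subring K), IsJaffardFamily D Θ ∧ T ∈ Θ

/-- A t-Jaffard overring: a member of some t-Jaffard family of `D`. -/
def IsTJaffardOverring (D T : Subring K) : Prop :=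
  ∃ Θ : Set (Subring K), IsTJaffardFamily D Θ ∧ T ∈ Θ

/-- A weak Jaffard family pointed at `Tinf`: a pre-Jaffard family whose set of members
that are not Jaffard overrings of `D` is exactly `{Tinf}`. -/
def IsWeakJaffardFamily (D : Subring K) (Θ : Set (Subring K)) (Tinf : Subring K) : Prop :=
  IsPreJaffardFamily D Θ ∧ {T ∈ Θ | ¬ IsJaffardOverring D T} = {Tinf}

end Families


section Statement0Aux

open Finset

variable {K : Type*} [Field K]

lemma st0_coeffs_mem_mul (D : Subring K) {p q : Polynomial K}
    (hp : ∀ i, p.coeff i ∈ D) (hq : ∀ i, q.coeff i ∈ D) : ∀ i, (p * q).coeff i ∈ D := by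
  intro i
  rw [Polynomial.coeff_mul]
  exact sum_mem fun x _ => mul_mem (hp x.1) (hq x.2)

lemma st0_coeffs_mem_prod (D : Subring K) {ι : Type*} (s : Finset ι) (g : ι → Polynomial K)
    (hg : ∀ j ∈ s, ∀ i, (g j).coeff i ∈ D) : ∀ i, (∏ j ∈ s, g j).coeff i ∈ D := by
  classical
  induction s using Finset.induction_on with
  | empty => intro i; rw [Finset.prod_empty, Polynomial.coeff_one]
             split
             · exact one_mem D
             · exact zero_mem D
  | @insert a s' hj ih =>
      rw [Finset.prod_insert hj]
      exact st0_coeffs_mem_mul D (hg a (Finset.mem_insert_self a s'))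
        (ih fun j hjs i => hg j (Finset.mem_insert_of_mem hjs) i)

/-- The key identity: if `d, t*d ∈ D`, then `d^(1+2+⋯+n) * f(t)` is a `D`-linear
combination of values of `f` on `D` (where `n = deg f ≥ 1`). -/
lemma st0_key_pow_mem (D T : Subring K) (hDT : D ≤ T) (f : Polynomial K)
    (hn : 1 ≤ f.natDegree) {t d : K} (hd : d ∈ D) (hc : t * d ∈ D) :
    d ^ (∑ k ∈ Finset.range f.natDegree, (k+1)) * f.eval t ∈
      Submodule.span ↥T ((fun x : K => f.eval x) '' (D : Set K)) := by
  set n := f.natDegree with hnn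
  set TT := ∑ k ∈ Finset.range n, (k+1) with hTT
  set P : Polynomial K := ∏ k ∈ Finset.range n, (Polynomial.C (d^(k+1)) - Polynomial.X) with hP
  set Nn : Polynomial K := Polynomial.C (d^TT) - P with hNn
  have hP0 : P.coeff 0 = d^TT := by
    rw [Polynomial.coeff_zero_eq_eval_zero, hP, Polynomial.eval_prod]
    simp only [Polynomial.eval_sub, Polynomial.eval_C, Polynomial.eval_X, sub_zero]
    rw [Finset.prod_pow_eq_pow_sum]
  have hN0 : Nn.coeff 0 = 0 := by
    rw [hNn, Polynomial.coeff_sub, Polynomial.coeff_C, hP0]; simp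
  set G := Nn.divX with hG
  have hGX : G * Polynomial.X = Nn := by
    have h := Polynomial.divX_mul_X_add Nn
    rw [hN0] at h; simpa using h
  have hfac : ∀ k : ℕ, (Polynomial.C (d^(k+1)) - Polynomial.X).natDegree ≤ 1 := by
    intro k
    refine le_trans (Polynomial.natDegree_sub_le _ _) ?_
    simp [Polynomial.natDegree_C]
  have hPdeg : P.natDegree ≤ n := by
    refine le_trans (Polynomial.natDegree_prod_le _ _) ?_
    refine le_trans (Finset.sum_le_card_nsmul _ _ 1 fun k _ => hfac k) (by simp)
  have hNdeg : Nn.natDegree ≤ n := by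
    refine le_trans (Polynomial.natDegree_sub_le _ _) ?_
    simp [Polynomial.natDegree_C, hPdeg]
  have hGdeg : G.natDegree < n := by
    by_cases hG0 : G = 0
    · rw [hG0, Polynomial.natDegree_zero]; omega
    · have h1 : (G * Polynomial.X).natDegree = G.natDegree + 1 := by
        rw [Polynomial.natDegree_mul hG0 Polynomial.X_ne_zero, Polynomial.natDegree_X]
      rw [hGX] at h1
      omega
  have hGeval : ∀ x : K, G.eval x = ∑ j ∈ Finset.range n, G.coeff j * x^j :=
    fun x => Polynomial.eval_eq_sum_range' hGdeg x
  -- the moments of `G` at the points `d^k`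
  have hA : ∀ k ∈ Finset.range n, d^(k+1) * G.eval (d^(k+1)) = d^TT := by
    intro k hk
    have hPz : P.eval (d^(k+1)) = 0 := by
      rw [hP, Polynomial.eval_prod]
      exact Finset.prod_eq_zero hk (by simp)
    have h2 : G.eval (d^(k+1)) * d^(k+1) = Nn.eval (d^(k+1)) := by
      rw [← hGX]; simp
    rw [hNn] at h2; simp [hPz] at h2
    rw [mul_comm]; exact h2
  -- the coefficients of `G` lie in `D`
  have hGcoeff : ∀ i, G.coeff i ∈ D := by
    intro i
    have hPc : ∀ i, P.coeff i ∈ D := by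
      refine st0_coeffs_mem_prod D _ _ ?_
      intro k _ i
      rw [Polynomial.coeff_sub, Polynomial.coeff_C, Polynomial.coeff_X]
      rcases i with _ | _ | i
      · simpa using pow_mem hd (k+1)
      · simpa using neg_mem (one_mem D)
      · simpa using zero_mem D
    have hdiv : G.coeff i = Nn.coeff (i+1) := Polynomial.coeff_divX
    rw [hdiv, hNn, Polynomial.coeff_sub, Polynomial.coeff_C]
    simp only [Nat.add_eq_zero, and_false, if_false]
    simpa using neg_mem (hPc (i+1))
  -- the representation identity
  have hev : ∀ x : K, f.eval x = ∑ k ∈ Finset.range (n+1), f.coeff k * x^k := by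
    intro x; exact Polynomial.eval_eq_sum_range x
  have hpow : ∀ j k : ℕ, (t*d*d^j)^k = t^k * (d^k * (d^k)^j) := by
    intro j k
    rw [mul_pow, mul_pow, ← pow_mul, ← pow_mul, Nat.mul_comm j k]
    ring
  have hrep : d^TT * f.eval t =
      (∑ j ∈ Finset.range n, G.coeff j * f.eval (t*d*d^j)) + (d^TT - G.eval 1) * f.eval 0 := by
    have h1 : ∀ j ∈ Finset.range n, G.coeff j * f.eval (t*d*d^j)
        = ∑ k ∈ Finset.range (n+1), G.coeff j * (f.coeff k * (t^k * (d^k * (d^k)^j))) := by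
      intro j _
      rw [hev (t*d*d^j), Finset.mul_sum]
      exact Finset.sum_congr rfl fun k _ => by rw [hpow j k]
    rw [Finset.sum_congr rfl h1, Finset.sum_comm]
    have h2 : ∀ k ∈ Finset.range (n+1),
        ∑ j ∈ Finset.range n, G.coeff j * (f.coeff k * (t^k * (d^k * (d^k)^j)))
        = f.coeff k * t^k * (d^k * G.eval (d^k)) := by
      intro k _
      rw [hGeval (d^k), Finset.mul_sum, Finset.mul_sum]
      exact Finset.sum_congr rfl fun j _ => by ring
    rw [Finset.sum_congr rfl h2, hev t, Finset.mul_sum, ← Polynomial.coeff_zero_eq_eval_zero]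
    have h3 : ∑ k ∈ Finset.range (n+1), d^TT * (f.coeff k * t^k)
        - ∑ k ∈ Finset.range (n+1), f.coeff k * t^k * (d^k * G.eval (d^k))
        = (d^TT - G.eval 1) * f.coeff 0 := by
      rw [← Finset.sum_sub_distrib]
      rw [Finset.sum_eq_single_of_mem 0 (Finset.mem_range.mpr (Nat.succ_pos n))]
      · simp only [pow_zero, mul_one, one_mul]; ring
      · intro k hk hk0
        obtain ⟨m, rfl⟩ := Nat.exists_eq_succ_of_ne_zero hk0
        have hmn : m ∈ Finset.range n := Finset.mem_range.mpr (by
          have := Finset.mem_range.mp hk; omega)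
        rw [hA m hmn]; ring
    linear_combination h3
  rw [hrep]
  refine Submodule.add_mem _ (Submodule.sum_mem _ fun j _ => ?_) ?_
  · have hw : G.coeff j ∈ T := hDT (hGcoeff j)
    have hpt : t*d*d^j ∈ D := mul_mem hc (pow_mem hd j)
    have hsm : G.coeff j * f.eval (t*d*d^j) = (⟨G.coeff j, hw⟩ : ↥T) • f.eval (t*d*d^j) := rfl
    rw [hsm]
    exact Submodule.smul_mem _ _ (Submodule.subset_span ⟨_, hpt, rfl⟩)
  · have hw : d^TT - G.eval 1 ∈ D := by
      refine sub_mem (pow_mem hd TT) ?_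
      rw [hGeval 1]
      refine sum_mem fun j _ => ?_
      simpa using hGcoeff j
    have hsm : (d^TT - G.eval 1) * f.eval 0
        = (⟨d^TT - G.eval 1, hDT hw⟩ : ↥T) • f.eval (0:K) := rfl
    rw [hsm]
    exact Submodule.smul_mem _ _ (Submodule.subset_span ⟨0, zero_mem D, rfl⟩)

/-- If each `z i ^ N` lies in the ideal `I`, then a high power of the sum does. -/
lemma st0_sum_pow_mem_ideal {R : Type*} [CommRing R] (I : Ideal R) (N : ℕ)
    {ι : Type*} [DecidableEq ι] (s : Finset ι) (z : ι → R) (h : ∀ i ∈ s, z i ^ N ∈ I) :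
    (∑ i ∈ s, z i) ^ (s.card * N + 1) ∈ I := by
  induction s using Finset.induction_on with
  | empty => simpa using I.zero_mem
  | @insert a s' ha ih =>
    rw [Finset.sum_insert ha, add_pow]
    refine sum_mem fun i hi => ?_
    by_cases hiN : N ≤ i
    · have hz : z a ^ i ∈ I := by
        have hzi : z a ^ i = z a ^ N * z a ^ (i - N) := by
          rw [← pow_add, Nat.add_sub_cancel' hiN]
        rw [hzi]
        exact Ideal.mul_mem_right _ _ (h a (Finset.mem_insert_self a s'))
      exact Ideal.mul_mem_right _ _ (Ideal.mul_mem_right _ _ hz)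
    · have hcard : (insert a s').card = s'.card + 1 := Finset.card_insert_of_notMem ha
      have hii : i < N := Nat.lt_of_not_le hiN
      have hS : (∑ x ∈ s', z x) ^ ((insert a s').card * N + 1 - i) ∈ I := by
        have hmul : (s'.card + 1) * N = s'.card * N + N := by ring
        have hgap : (insert a s').card * N + 1 - i
            = (s'.card * N + 1) + (N - i) := by
          rw [hcard]; omega
        rw [hgap, pow_add]
        exact Ideal.mul_mem_right _ _
          (ih fun j hj => h j (Finset.mem_insert_of_mem hj))
      exact Ideal.mul_mem_right _ _ (Ideal.mul_mem_left _ _ hS)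

lemma st0_sum_ulift_fin_two {β : Type*} [AddCommMonoid β] (g : ULift (Fin 2) → β) :
    ∑ i, g i = g ⟨0⟩ + g ⟨1⟩ := by
  rw [← Equiv.sum_comp (Equiv.ulift (α := Fin 2)).symm g]
  simp [Fin.sum_univ_two]

end Statement0Aux

/-- From flatness: for `t ∈ T` there are `dd j ∈ D` with `t * dd j ∈ D` and a
`T`-linear combination of the `dd j` equal to `1`. -/
lemma st0_flat_partition {K : Type u} [Field K] (D : Subring K) [IsFractionRing ↥D K]
    (T : Subring K) (hDT : D ≤ T) (hflat : SubringFlat D T hDT) {t : K} (htT : t ∈ T) :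
    ∃ (m : ℕ) (dd : Fin m → ↥D) (y : Fin m → ↥T),
      (∀ j, t * (dd j : K) ∈ D) ∧ (∑ j, (dd j : K) * (y j : K)) = 1 := by
  classical
  letI alg : Algebra ↥D ↥T := (Subring.inclusion hDT).toAlgebra
  haveI hF : Module.Flat ↥D ↥T := hflat
  obtain ⟨⟨num, den⟩, hfrac⟩ := IsLocalization.surj (nonZeroDivisors ↥D) t
  have hfr : t * ((den : ↥D) : K) = ((num : ↥D) : K) := hfrac
  have hden0 : (((den : ↥D) : K)) ≠ 0 := by
    intro h
    exact nonZeroDivisors.coe_ne_zero den (Subtype.ext h)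
  set xv : ULift.{u} (Fin 2) → ↥T := fun i => ![(⟨t, htT⟩ : ↥T), 1] i.down with hxv
  set fv : ULift.{u} (Fin 2) → ↥D := fun i => ![(den : ↥D), -num] i.down with hfv
  have hsmulDT : ∀ (r : ↥D) (m : ↥T), ((r • m : ↥T) : K) = (r : K) * (m : K) := by
    intro r m
    rw [Algebra.smul_def, RingHom.algebraMap_toAlgebra]
    rfl
  have hrel : ∑ i, fv i • xv i = 0 := by
    rw [st0_sum_ulift_fin_two]
    apply Subtype.ext
    rw [Subring.coe_add, hsmulDT, hsmulDT]
    simp only [hxv, hfv]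
    simp only [Matrix.cons_val_zero, Matrix.cons_val_one, Matrix.head_cons]
    rw [mul_comm ((den : ↥D) : K) t, hfr]
    push_cast
    ring
  obtain ⟨κ, A, y, hAy, hArel⟩ :=
    @Module.Flat.isTrivialRelation_of_sum_smul_eq_zero (↥D) (↥T) _ _ _ hF
      (ULift (Fin 2)) _ fv xv hrel
  let e := Equiv.refl (Fin κ)
  refine ⟨κ, fun i => A ⟨1⟩ (e.symm i), fun i => y (e.symm i), ?_, ?_⟩
  · -- t * (A ⟨1⟩ j) = A ⟨0⟩ j ∈ D
    intro i
    set j := e.symm i with hj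
    have h2 := hArel j
    rw [st0_sum_ulift_fin_two] at h2
    simp only [hfv, Matrix.cons_val_zero, Matrix.cons_val_one, Matrix.head_cons] at h2
    have h3 : ((den : ↥D) : K) * ((A ⟨0⟩ j : ↥D) : K)
        = ((num : ↥D) : K) * ((A ⟨1⟩ j : ↥D) : K) := by
      have h2' := congrArg (fun z : ↥D => (z : K)) h2
      push_cast at h2'
      linear_combination h2'
    have h4 : t * ((A ⟨1⟩ j : ↥D) : K) = ((A ⟨0⟩ j : ↥D) : K) := by
      apply mul_left_cancel₀ hden0
      rw [← mul_assoc, mul_comm (((den : ↥D)) : K) t, hfr, h3]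
    rw [h4]
    exact (A ⟨0⟩ j).2
  · -- ∑ dd j * y j = 1
    have h1 : xv ⟨1⟩ = ∑ j, A ⟨1⟩ j • y j := hAy ⟨1⟩
    have h2 : ((1 : ↥T) : K) = ∑ j, ((A ⟨1⟩ j : ↥D) : K) * ((y j : ↥T) : K) := by
      have h1' := congrArg (fun z : ↥T => (z : K)) h1
      simp only [hxv, Matrix.cons_val_one, Matrix.head_cons, Matrix.cons_val_zero] at h1'
      rw [h1']
      rw [AddSubmonoidClass.coe_finset_sum]
      exact Finset.sum_congr rfl fun j _ => hsmulDT _ _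
    rw [← Equiv.sum_comp e.symm (fun j => ((A ⟨1⟩ j : ↥D) : K) * ((y j : ↥T) : K))] at h2
    rw [← h2]
    rfl


/-- Let `D` be an integral domain with quotient field `K`, let `T` be a flat
overring of `D`, and let `f ∈ K[X]`. Then the `T`-submodule of `K` generated by
`f(D) = {f(d) : d ∈ D}` equals the `T`-submodule of `K` generated by `f(T) = {f(t) : t ∈ T}`;
that is, `f(D)T = f(T)T`. -/
theorem statement0 {K : Type*} [Field K] (D : Subring K) [IsFractionRing ↥D K]
    (T : Subring K) (hDT : D ≤ T) (hflat : SubringFlat D T hDT) (f : Polynomial K) :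
    Submodule.span ↥T ((fun x : K => f.eval x) '' (D : Set K)) =
      Submodule.span ↥T ((fun x : K => f.eval x) '' (T : Set K)) := by
  classical
  apply le_antisymm
  · rw [Submodule.span_le]
    rintro _ ⟨x, hx, rfl⟩
    exact Submodule.subset_span ⟨x, hDT hx, rfl⟩
  rw [Submodule.span_le]
  rintro _ ⟨t, htT, rfl⟩
  simp only [SetLike.mem_coe]
  set M := Submodule.span ↥T ((fun x : K => f.eval x) '' (D : Set K)) with hM
  show f.eval t ∈ M
  by_cases hn0 : f.natDegree = 0
  · have hfC : f = Polynomial.C (f.coeff 0) := Polynomial.eq_C_of_natDegree_eq_zero hn0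
    refine Submodule.subset_span ⟨0, D.zero_mem, ?_⟩
    rw [hfC]; simp
  have hn1 : 1 ≤ f.natDegree := Nat.one_le_iff_ne_zero.mpr hn0
  obtain ⟨m, dd, y, hddt, hsum1⟩ := st0_flat_partition D T hDT hflat htT
  set TT := ∑ k ∈ Finset.range f.natDegree, (k+1) with hTTdef
  set I : Ideal ↥T :=
    { carrier := {σ : ↥T | (σ : K) * f.eval t ∈ M}
      add_mem' := fun {a b} ha hb => by
        simp only [Set.mem_setOf_eq] at *
        rw [Subring.coe_add, add_mul]
        exact Submodule.add_mem _ ha hb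
      zero_mem' := by
        simp only [Set.mem_setOf_eq, ZeroMemClass.coe_zero, zero_mul]
        exact Submodule.zero_mem _
      smul_mem' := fun r a ha => by
        simp only [Set.mem_setOf_eq, smul_eq_mul] at *
        have hmem := Submodule.smul_mem M r ha
        simpa [Subring.smul_def, smul_eq_mul, mul_assoc, Subring.coe_mul] using hmem } with hI
  set z : Fin m → ↥T := fun j => (⟨(dd j : K), hDT (dd j).2⟩ : ↥T) * y j with hz
  have hzmem : ∀ j ∈ Finset.univ (α := Fin m), z j ^ TT ∈ I := by
    intro j _
    have hkey : (dd j : K) ^ TT * f.eval t ∈ M :=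
      st0_key_pow_mem D T hDT f hn1 (dd j).2 (hddt j)
    show ((z j ^ TT : ↥T) : K) * f.eval t ∈ M
    have hc : ((z j ^ TT : ↥T) : K) * f.eval t
        = ((y j ^ TT : ↥T) : K) * ((dd j : K) ^ TT * f.eval t) := by
      rw [hz]; push_cast; ring
    rw [hc]
    exact Submodule.smul_mem M (y j ^ TT) hkey
  have hz1 : (∑ j, z j) = 1 := by
    apply Subtype.ext
    rw [AddSubmonoidClass.coe_finset_sum]
    simpa [hz] using hsum1
  have h1I : (1 : ↥T) ∈ I := by
    have h := st0_sum_pow_mem_ideal I TT (ι := Fin m) Finset.univ z hzmem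
    rw [hz1, one_pow] at h
    exact h
  have hfin : ((1 : ↥T) : K) * f.eval t ∈ M := h1I
  simpa using hfin
end

section
/- Let D be an integral domain with quotient field K, let T be a flat overring of D, and let f ∈ K[X]. Then f ∈ Int(D)T if and only if (D :_D f(D))T = T, where (D :_D f(D)) := {d ∈ D : d·f(c) ∈ D for all c ∈ D} is an ideal of D and (D :_D f(D))T denotes its extension to T. -/
open Polynomial

section S1Aux
universe u
variable {K : Type u} [Field K]

def colonIdeal (D : Subring K) (x : K) : Ideal ↥D where
  carrier := {d : ↥D | (d : K) * x ∈ D}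
  zero_mem' := by simpa using zero_mem D
  add_mem' := by
    intro a b ha hb
    simpa [add_mul] using add_mem ha hb
  smul_mem' := by
    intro r d hd
    have := mul_mem r.2 hd
    simpa [mul_assoc] using this

lemma mem_colonIdeal {D : Subring K} {x : K} {d : ↥D} :
    d ∈ colonIdeal D x ↔ (d : K) * x ∈ D := Iff.rfl

set_option maxHeartbeats 1000000 in
lemma richman (D : Subring K) [IsFractionRing ↥D K] (T : Subring K) (hDT : D ≤ T)
    (hflat : SubringFlat D T hDT) (t : ↥T) :
    Ideal.map (Subring.inclusion hDT) (colonIdeal D (t : K)) = ⊤ := by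
  letI : Algebra ↥D ↥T := (Subring.inclusion hDT).toAlgebra
  haveI hfl : Module.Flat ↥D ↥T := hflat
  obtain ⟨a, b, hb, hab⟩ := IsFractionRing.div_surjective (A := ↥D) (t : K)
  have hbK : (b : K) ≠ 0 := by
    have := nonZeroDivisors.ne_zero hb
    exact_mod_cast fun h => this (Subtype.ext h)
  have habK : (a : K) / (b : K) = (t : K) := hab
  set F : ULift.{u} (Fin 2) → ↥D := fun i => ![b, -a] i.down with hF
  set X : ULift.{u} (Fin 2) → ↥T := fun i => ![t, 1] i.down with hX
  have hsmul : ∀ (d : ↥D) (y : ↥T), ((d • y : ↥T) : K) = (d : K) * (y : K) := by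
    intro d y
    rw [Algebra.smul_def]
    rfl
  have hsum : ∀ (g : ULift.{u} (Fin 2) → K), ∑ i, g i = g ⟨0⟩ + g ⟨1⟩ := by
    intro g
    rw [← Equiv.sum_comp (Equiv.ulift (α := Fin 2)).symm g, Fin.sum_univ_two]
    rfl
  have h0 : ∑ i, F i • X i = 0 := by
    apply Subtype.ext
    have hc : ((∑ i, F i • X i : ↥T) : K) = ∑ i, ((F i • X i : ↥T) : K) := by
      exact_mod_cast rfl
    rw [hc, hsum (fun i => ((F i • X i : ↥T) : K))]
    simp only [hF, hX, hsmul]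
    simp only [Matrix.cons_val_zero, Matrix.cons_val_one, Matrix.head_cons]
    push_cast
    rw [← habK]
    field_simp
    ring
  obtain ⟨κ, coef, y, hx, hrel⟩ :=
    @Module.Flat.isTrivialRelation_of_sum_smul_eq_zero ↥D ↥T _ _ _ hfl (ULift.{u} (Fin 2)) _ F X h0
  rw [Ideal.eq_top_iff_one]
  have h1 : (1 : ↥T) = ∑ j, coef ⟨1⟩ j • y j := by
    have := hx ⟨1⟩
    simpa [hX] using this
  rw [h1]
  refine Submodule.sum_mem _ fun j _ => ?_
  have hj : coef ⟨1⟩ j ∈ colonIdeal D (t : K) := by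
    have hr := hrel j
    have hsumD : ∀ (g : ULift.{u} (Fin 2) → ↥D), ∑ i, g i = g ⟨0⟩ + g ⟨1⟩ := by
      intro g
      rw [← Equiv.sum_comp (Equiv.ulift (α := Fin 2)).symm g, Fin.sum_univ_two]
      rfl
    rw [hsumD (fun i => F i * coef i j)] at hr
    simp only [hF, Matrix.cons_val_zero, Matrix.cons_val_one, Matrix.head_cons] at hr
    have hrK : (b : K) * (coef ⟨0⟩ j : K) + (-(a : K)) * (coef ⟨1⟩ j : K) = 0 := by
      exact_mod_cast congrArg (Subtype.val : ↥D → K) hr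
    rw [mem_colonIdeal]
    have heq : (coef ⟨1⟩ j : K) * (t : K) = (coef ⟨0⟩ j : K) := by
      rw [← habK]
      field_simp
      linear_combination -hrK
    rw [heq]
    exact (coef ⟨0⟩ j).2
  have hmul : coef ⟨1⟩ j • y j = Subring.inclusion hDT (coef ⟨1⟩ j) * y j := by
    rw [Algebra.smul_def]; rfl
  rw [hmul]
  exact Ideal.mul_mem_right _ _ (Ideal.mem_map_of_mem _ hj)

end S1Aux

lemma map_prod_eq_top {R S : Type*} [CommRing R] [CommRing S] (φ : R →+* S)
    {ι : Type*} (s : Finset ι) (I : ι → Ideal R) (h : ∀ i ∈ s, Ideal.map φ (I i) = ⊤) :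
    Ideal.map φ (∏ i ∈ s, I i) = ⊤ := by
  refine Finset.prod_induction I (fun J => Ideal.map φ J = ⊤) (fun a b ha hb => ?_) ?_ h
  · show Ideal.map φ (a * b) = ⊤
    rw [Ideal.map_mul, ha, hb, Ideal.mul_top]
  · show Ideal.map φ 1 = ⊤
    rw [Ideal.one_eq_top, Ideal.map_top]


/-- Let `D` be an integral domain with quotient field `K`, let `T` be a flat
overring of `D`, and let `f ∈ K[X]`. Then `f ∈ Int(D)T` if and only if
`(D :_D f(D))T = T`, where `(D :_D f(D)) = {d ∈ D : d·f(c) ∈ D for all c ∈ D}` is an ideal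
of `D` and `(D :_D f(D))T` denotes its extension to `T`. -/
theorem statement1 {K : Type*} [Field K] (D : Subring K) [IsFractionRing ↥D K]
    (T : Subring K) (hDT : D ≤ T) (hflat : SubringFlat D T hDT) (f : Polynomial K) :
    f ∈ intMul D T ↔ Ideal.map (Subring.inclusion hDT) (condIdeal D f) = ⊤ := by

  constructor
  · intro hf
    obtain ⟨n, cf, g, hsum⟩ := Submodule.mem_span_set'.mp (mem_intMul.mp hf)
    set J : Ideal ↥D := ∏ i : Fin n, colonIdeal D ((cf i : K)) with hJ
    have hJtop : Ideal.map (Subring.inclusion hDT) J = ⊤ :=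
      map_prod_eq_top _ _ _ (fun i _ => richman D T hDT hflat (cf i))
    have hJle : J ≤ condIdeal D f := by
      intro d hd c hc
      have hdi : ∀ i : Fin n, (d : K) * (cf i : K) ∈ D := fun i =>
        (le_trans Ideal.prod_le_inf (Finset.inf_le (Finset.mem_univ i))) hd
      have hev : f.eval c = ∑ i : Fin n, (cf i : K) * ((g i : Polynomial K).eval c) := by
        rw [← hsum, Polynomial.eval_finset_sum]
        refine Finset.sum_congr rfl fun i _ => ?_
        rw [Subring.smul_def, Polynomial.smul_eq_C_mul, Polynomial.eval_mul, Polynomial.eval_C]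
      rw [hev, Finset.mul_sum]
      refine sum_mem fun i _ => ?_
      rw [← mul_assoc]
      exact mul_mem (hdi i) ((g i).2 c hc)
    exact top_le_iff.mp (hJtop ▸ Ideal.map_mono hJle)
  · intro h
    have h1 : (1 : ↥T) ∈ Submodule.span ↥T
        ((Subring.inclusion hDT) '' (condIdeal D f)) := by
      have : (1 : ↥T) ∈ Ideal.map (Subring.inclusion hDT) (condIdeal D f) :=
        h ▸ Submodule.mem_top
      exact this
    obtain ⟨n, cf, g, hsum⟩ := Submodule.mem_span_set'.mp h1
    choose d hdmem hdeq using fun i => (g i).2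
    have key : ∑ i : Fin n, (cf i : K) * ((d i : ↥D) : K) = 1 := by
      have hc := congrArg (Subtype.val : ↥T → K) hsum
      push_cast at hc
      rw [← hc]
      refine Finset.sum_congr rfl fun i _ => ?_
      congr 1
      exact congrArg (Subtype.val : ↥T → K) (hdeq i)
    have hmem : ∀ i, (Polynomial.C ((d i : ↥D) : K) * f) ∈
        {g : Polynomial K | ∀ c ∈ D, g.eval c ∈ D} := by
      intro i c hc
      have := hdmem i c hc
      simpa [Polynomial.eval_mul] using this
    have hfe : ∑ i : Fin n, cf i • (Polynomial.C ((d i : ↥D) : K) * f) = f := by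
      simp only [Subring.smul_def, Polynomial.smul_eq_C_mul, ← mul_assoc, ← map_mul]
      rw [← Finset.sum_mul, ← map_sum, key, map_one, one_mul]
    rw [mem_intMul, ← hfe]
    exact Submodule.sum_mem _ fun i _ => Submodule.smul_mem _ _ (Submodule.subset_span (hmem i))
end

section
/- Let D be an integral domain with quotient field K, let T be a flat overring of D, and let f ∈ K[X]. Then f ∈ Int(T) if and only if (T :_T f(D)T) = T, where (T :_T f(D)T) := {t ∈ T : t·f(d) ∈ T for all d ∈ D}. -/
open Polynomial

section Statement2Aux

/-- Coefficients of the dilation `p(sX)`. -/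
lemma coeff_comp_C_mul_X {K : Type*} [Field K] (p : Polynomial K) (s : K) (k : ℕ) :
    (p.comp (C s * X)).coeff k = s ^ k * p.coeff k := by
  induction p using Polynomial.induction_on' with
  | add p q hp hq => simp [add_comp, hp, hq, mul_add]
  | monomial m a =>
    rw [monomial_comp, mul_pow, ← C_pow, coeff_monomial,
      show C a * (C (s ^ m) * X ^ m) = C (s ^ m * a) * X ^ m from by rw [C_mul]; ring,
      coeff_C_mul, coeff_X_pow]
    split_ifs with h1 h2 h3 <;> simp_all

/-- Key induction: if `p` maps `D` into some `D`-module, then a power of `s` times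
`p(1/s)` lies in the `D`-span of the values of `p` on `D`. -/
lemma key_induction {K : Type*} [Field K] (D : Subring K) :
    ∀ (n : ℕ) (p : Polynomial K), p.natDegree ≤ n → ∀ s : K, s ∈ D →
    ∃ e : ℕ, s ^ e * p.eval s⁻¹ ∈
      Submodule.span ↥D (Set.range (fun d : ↥D => p.eval (d : K))) := by
  intro n
  induction n with
  | zero =>
    intro p hp s _
    refine ⟨0, ?_⟩
    have hc := Polynomial.eq_C_of_natDegree_le_zero hp
    have : p.eval s⁻¹ = p.eval (((0 : ↥D) : K)) := by rw [hc]; simp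
    rw [pow_zero, one_mul, this]
    exact Submodule.subset_span ⟨0, rfl⟩
  | succ n ih =>
    intro p hp s hs
    by_cases hs0 : s = 0
    · exact ⟨1, by simp [hs0]⟩
    set q : Polynomial K := p.comp (C s * X) - C (s ^ (n+1)) * p with hq
    have hqdeg : q.natDegree ≤ n := by
      rw [Polynomial.natDegree_le_iff_coeff_eq_zero]
      intro m hm
      rw [hq, Polynomial.coeff_sub, coeff_comp_C_mul_X, coeff_C_mul]
      rcases eq_or_lt_of_le (Nat.succ_le_of_lt hm) with h | h
      · rw [← h, pow_succ]; ring
      · rw [Polynomial.coeff_eq_zero_of_natDegree_lt (lt_of_le_of_lt hp h)]; ring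
    have hqspan : Submodule.span ↥D (Set.range (fun d : ↥D => q.eval (d : K))) ≤
        Submodule.span ↥D (Set.range (fun d : ↥D => p.eval (d : K))) := by
      rw [Submodule.span_le]
      rintro _ ⟨d, rfl⟩
      have h1 : q.eval (d : K) = p.eval (((⟨s, hs⟩ : ↥D) * d : ↥D) : K)
          - (⟨s, hs⟩ : ↥D) ^ (n+1) • p.eval (d : K) := by
        simp only [hq, eval_sub, eval_comp, eval_mul, eval_C, eval_X, Subring.smul_def]
        push_cast
        simp only [smul_eq_mul]
      show q.eval (d : K) ∈ (Submodule.span ↥D (Set.range (fun d : ↥D => p.eval (d : K))) : Set K)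
      rw [h1]
      exact sub_mem (Submodule.subset_span ⟨_, rfl⟩)
        (Submodule.smul_mem _ _ (Submodule.subset_span ⟨_, rfl⟩))
    obtain ⟨e, he⟩ := ih q hqdeg s hs
    refine ⟨e + (n + 1), ?_⟩
    have hqe : q.eval s⁻¹ = p.eval 1 - s ^ (n+1) * p.eval s⁻¹ := by
      simp [hq, mul_inv_cancel₀ hs0]
    have key : s ^ (e + (n+1)) * p.eval s⁻¹
        = (⟨s, hs⟩ : ↥D) ^ e • p.eval (((1 : ↥D) : K)) - s ^ e * q.eval s⁻¹ := by
      rw [hqe, Subring.smul_def]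
      push_cast
      simp only [smul_eq_mul]
      ring
    rw [key]
    exact sub_mem (Submodule.smul_mem _ _ (Submodule.subset_span ⟨1, rfl⟩)) (hqspan he)

universe u_aux

/-- Flatness gives "denominator ideals spread to the overring": for `t ∈ T` there are
`j_i ∈ D` with `j_i t ∈ D` and `∑ j_i u_i = 1` for some `u_i ∈ T`. -/
lemma flat_denominators {K : Type u_aux} [Field K] (D : Subring K) [IsFractionRing ↥D K]
    (T : Subring K) (hDT : D ≤ T) (hflat : SubringFlat D T hDT) (t : ↥T) :
    ∃ (m : ℕ) (j : Fin m → ↥D) (u : Fin m → ↥T),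
      (∀ i, (j i : K) * (t : K) ∈ D) ∧ (∑ i, (j i : K) * (u i : K)) = 1 := by
  letI : Algebra ↥D ↥T := (Subring.inclusion hDT).toAlgebra
  haveI hFl : Module.Flat ↥D ↥T := hflat
  have smul_eq : ∀ (d : ↥D) (x : ↥T), ((d • x : ↥T) : K) = (d : K) * (x : K) := by
    intro d x
    rw [Algebra.smul_def]
    rfl
  obtain ⟨a, b, hb, hab⟩ := IsFractionRing.div_surjective (A := ↥D) (t : K)
  have hb0 : (b : K) ≠ 0 := fun h => nonZeroDivisors.ne_zero hb (Subtype.ext h)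
  have hab2 : (a : K) / (b : K) = (t : K) := hab
  have hab' : (b : K) * (t : K) = (a : K) := by
    rw [← hab2, mul_comm, div_mul_cancel₀ _ hb0]
  set ι : Type u_aux := Option PUnit.{u_aux+1}
  set ff : ι → ↥D := fun i => Option.elim i (-a) (fun _ => b) with hff
  set xx : ι → ↥T := fun i => Option.elim i 1 (fun _ => t) with hxx
  have hrel : ∑ i, ff i • xx i = 0 := by
    rw [Fintype.sum_option, Fintype.sum_unique]
    apply Subtype.ext
    push_cast [smul_eq]
    simp only [hff, hxx, Option.elim]
    push_cast
    linear_combination hab'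
  obtain ⟨κ0, A, y, hA1, hA2⟩ :=
    @Module.Flat.isTrivialRelation_of_sum_smul_eq_zero ↥D ↥T _ _ _ hFl ι _ ff xx hrel
  let κ : Type := Fin κ0
  refine ⟨Fintype.card κ, fun i => A none ((Fintype.equivFin κ).symm i),
    fun i => y ((Fintype.equivFin κ).symm i), ?_, ?_⟩
  · intro i
    set j0 := (Fintype.equivFin κ).symm i with hj0
    have h2 := hA2 j0
    rw [Fintype.sum_option, Fintype.sum_unique] at h2
    simp only [hff, Option.elim] at h2
    have h2K := congrArg (fun z : ↥D => (z : K)) h2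
    push_cast at h2K
    have : (A none j0 : K) * (t : K) = ((A (some default) j0 : ↥D) : K) := by
      apply mul_left_cancel₀ hb0
      rw [show (b:K) * ((A none j0 : K) * (t:K)) = (A none j0 : K) * ((b:K) * (t:K)) from by ring,
        hab']
      linear_combination -h2K
    rw [this]
    exact (A (some default) j0).2
  · have h1 := hA1 none
    simp only [hxx, Option.elim] at h1
    have h1K := congrArg (fun z : ↥T => (z : K)) h1
    push_cast [smul_eq] at h1K
    show ∑ i : Fin (Fintype.card κ),
        (fun j0 => (A none j0 : K) * (y j0 : K)) ((Fintype.equivFin κ).symm i) = 1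
    rw [Equiv.sum_comp (Fintype.equivFin κ).symm (fun j0 => (A none j0 : K) * (y j0 : K))]
    exact h1K.symm

/-- The ideal of `T`-multipliers of a fixed element `x ∈ K` into `T`. -/
def valIdealAux {K : Type*} [Field K] (T : Subring K) (x : K) : Ideal ↥T where
  carrier := {t : ↥T | (t : K) * x ∈ T}
  zero_mem' := by simpa using zero_mem T
  add_mem' := fun {a b} ha hb => by simpa [add_mul] using add_mem ha hb
  smul_mem' := fun r t ht => by simpa [mul_assoc] using mul_mem r.2 ht

lemma mem_of_mem_span_range {K : Type*} [Field K] {D T : Subring K} (hDT : D ≤ T) {g : ↥D → K}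
    (hg : ∀ d, g d ∈ T) {x : K} (hx : x ∈ Submodule.span ↥D (Set.range g)) : x ∈ T := by
  induction hx using Submodule.span_induction with
  | mem y hy => obtain ⟨d, rfl⟩ := hy; exact hg d
  | zero => exact zero_mem T
  | add y z _ _ hy hz => exact add_mem hy hz
  | smul c y _ hy => rw [Subring.smul_def]; exact mul_mem (hDT c.2) hy

end Statement2Aux

/-- Let `D` be an integral domain with quotient field `K`, let `T` be a flat
overring of `D`, and let `f ∈ K[X]`. Then `f ∈ Int(T)` if and only if `(T :_T f(D)T) = T`,
where `(T :_T f(D)T) = {t ∈ T : t·f(d) ∈ T for all d ∈ D}`. -/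
theorem statement2 {K : Type*} [Field K] (D : Subring K) [IsFractionRing ↥D K]
    (T : Subring K) (hDT : D ≤ T) (hflat : SubringFlat D T hDT) (f : Polynomial K) :
    f ∈ intPoly T ↔ condIdealT D T f = ⊤ := by
  constructor
  · intro hf
    rw [Ideal.eq_top_iff_one]
    show ∀ c ∈ D, ((1 : ↥T) : K) * f.eval c ∈ T
    intro c hc
    simpa using hf c (hDT hc)
  · intro hI
    have h1 : (1 : ↥T) ∈ condIdealT D T f := hI.symm ▸ Submodule.mem_top
    have hfD : ∀ d ∈ D, f.eval d ∈ T := by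
      intro d hd
      simpa using h1 d hd
    rw [mem_intPoly]
    intro t ht
    by_contra hft
    have hne : valIdealAux T (f.eval t) ≠ ⊤ := by
      intro htop
      have h2 : (1 : ↥T) ∈ valIdealAux T (f.eval t) := htop.symm ▸ Submodule.mem_top
      have h3 : ((1 : ↥T) : K) * f.eval t ∈ T := h2
      exact hft (by simpa using h3)
    obtain ⟨M, hM, hIM⟩ := Ideal.exists_le_maximal _ hne
    obtain ⟨m, j, u, hjt, hsum⟩ := flat_denominators D T hDT hflat ⟨t, ht⟩
    have hex : ∃ i, Subring.inclusion hDT (j i) ∉ M := by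
      by_contra hall
      push_neg at hall
      have hz : (∑ i, Subring.inclusion hDT (j i) * u i : ↥T) ∈ M :=
        Ideal.sum_mem M (fun i _ => M.mul_mem_right _ (hall i))
      have hz1 : (∑ i, Subring.inclusion hDT (j i) * u i : ↥T) = 1 := by
        apply Subtype.ext
        push_cast
        exact hsum
      exact hM.ne_top (Ideal.eq_top_iff_one M |>.mpr (hz1 ▸ hz))
    obtain ⟨i, hiM⟩ := hex
    set s : K := ((j i : ↥D) : K) with hs_def
    have hsD : s ∈ D := (j i).2
    have hst : s * t ∈ D := hjt i
    have hs0 : s ≠ 0 := by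
      intro h0
      apply hiM
      have : Subring.inclusion hDT (j i) = 0 := Subtype.ext h0
      rw [this]
      exact M.zero_mem
    set p : Polynomial K := f.comp (C (s * t) * X) with hp_def
    have hpvals : ∀ d : ↥D, p.eval (d : K) ∈ T := by
      intro d
      rw [hp_def, Polynomial.eval_comp]
      simp only [Polynomial.eval_mul, Polynomial.eval_C, Polynomial.eval_X]
      exact hfD _ (mul_mem hst d.2)
    obtain ⟨e, he⟩ := key_induction D p.natDegree p le_rfl s hsD
    have hin : s ^ e * p.eval s⁻¹ ∈ T := mem_of_mem_span_range hDT hpvals he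
    have hps : p.eval s⁻¹ = f.eval t := by
      rw [hp_def, Polynomial.eval_comp]
      simp only [Polynomial.eval_mul, Polynomial.eval_C, Polynomial.eval_X]
      congr 1
      field_simp
    rw [hps] at hin
    have hmem : (Subring.inclusion hDT (j i)) ^ e ∈ valIdealAux T (f.eval t) := by
      show (((Subring.inclusion hDT (j i)) ^ e : ↥T) : K) * f.eval t ∈ T
      have : (((Subring.inclusion hDT (j i)) ^ e : ↥T) : K) = s ^ e := by push_cast; rfl
      rw [this]
      exact hin
    exact hiM (hM.isPrime.mem_of_pow_mem e (hIM hmem))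
end

section
/- Let D be an integral domain with quotient field K and let T be a flat overring of D. Then Int(D)T = Int(T) if and only if, for every f ∈ K[X], (D :_D f(D))T = (T :_T f(D)T), where (D :_D f(D)) := {d ∈ D : d·f(c) ∈ D for all c ∈ D}, (D :_D f(D))T denotes its extension to T, and (T :_T f(D)T) := {t ∈ T : t·f(d) ∈ T for all d ∈ D}. -/
open Polynomial

section Statement3Aux

open Polynomial

set_option maxHeartbeats 1600000
set_option synthInstance.maxHeartbeats 400000

variable {K : Type*} [Field K]

lemma s3_exists_num_den {D : Subring K} [IsFractionRing ↥D K] (z : K) :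
    ∃ a b : ↥D, (b : K) ≠ 0 ∧ (b : K) * z = (a : K) := by
  obtain ⟨a, b, hb, h⟩ := IsFractionRing.div_surjective (A := ↥D) z
  have hb0 : (b : K) ≠ 0 := fun h0 =>
    nonZeroDivisors.ne_zero hb (Subtype.ext (by simpa using h0))
  have h' : (a : K) / (b : K) = z := h
  refine ⟨a, b, hb0, ?_⟩
  rw [← h', mul_comm, div_mul_cancel₀ _ hb0]

/-- The conductor `(D :_D t)` of an element `t : K`, as an ideal of `D`. -/
def s3colonD (D : Subring K) (t : K) : Ideal ↥D where
  carrier := {d : ↥D | (d : K) * t ∈ D}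
  add_mem' := fun {x y} hx hy => by
    simpa [add_mul] using D.add_mem hx hy
  zero_mem' := by simpa using D.zero_mem
  smul_mem' := fun r d hd => by
    have h1 : ((r : K) * (d : K)) * t = (r : K) * ((d : K) * t) := by ring
    simpa [smul_eq_mul, h1] using D.mul_mem r.2 hd

@[simp] lemma s3_mem_colonD {D : Subring K} {t : K} {d : ↥D} :
    d ∈ s3colonD D t ↔ (d : K) * t ∈ D := Iff.rfl

/-- Multiplication by `a` as a `D`-linear endomorphism of `D`. -/
def s3mulMap (D : Subring K) (a : ↥D) : ↥D →ₗ[↥D] ↥D where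
  toFun := fun x => a * x
  map_add' := fun x y => mul_add a x y
  map_smul' := fun r x => by
    simp only [smul_eq_mul, RingHom.id_apply]
    ring

@[simp] lemma s3mulMap_apply {D : Subring K} (a x : ↥D) : s3mulMap D a x = a * x := rfl

/-- Richman's theorem: for a flat overring `T` of `D`, the ideal of `T` generated by
`(D :_D t)` is all of `T`. -/
lemma s3_richman_span {D T : Subring K} (hDT : D ≤ T) [IsFractionRing ↥D K]
    (hflat : SubringFlat D T hDT) (t : ↥T) :
    Ideal.span {u : ↥T | (u : K) ∈ D ∧ (u : K) * (t : K) ∈ D} = ⊤ := by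
  obtain ⟨a, b, hb0, hab⟩ := s3_exists_num_den (D := D) (t : K)
  letI : Algebra ↥D ↥T := (Subring.inclusion hDT).toAlgebra
  haveI hF : Module.Flat ↥D ↥T := hflat
  set J : Ideal ↥D := s3colonD D (t : K) with hJdef
  set bI : Ideal ↥D := Ideal.span {b} with hbI
  have hcomap : J ≤ Submodule.comap (s3mulMap D a) bI := by
    intro d hd
    have hdt : (d : K) * (t : K) ∈ D := hd
    simp only [Submodule.mem_comap, s3mulMap_apply]
    rw [hbI, Ideal.mem_span_singleton']
    refine ⟨⟨(d : K) * (t : K), hdt⟩, Subtype.ext ?_⟩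
    push_cast
    calc (d : K) * (t : K) * (b : K) = ((b : K) * (t : K)) * (d : K) := by ring
    _ = (a : K) * (d : K) := by rw [hab]
  set φ : (↥D ⧸ J) →ₗ[↥D] (↥D ⧸ bI) := Submodule.mapQ J bI (s3mulMap D a) hcomap with hφ
  have hφinj : Function.Injective φ := by
    rw [← LinearMap.ker_eq_bot, Submodule.eq_bot_iff]
    intro x hx
    obtain ⟨d, rfl⟩ := Submodule.Quotient.mk_surjective J x
    rw [LinearMap.mem_ker, hφ, Submodule.mapQ_apply, Submodule.Quotient.mk_eq_zero, hbI,
      Ideal.mem_span_singleton'] at hx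
    obtain ⟨c, hc⟩ := hx
    rw [Submodule.Quotient.mk_eq_zero, hJdef]
    rw [s3_mem_colonD]
    have hc' : (c : K) * (b : K) = (a : K) * (d : K) := by
      have h3 := congrArg (Subtype.val : ↥D → K) hc
      simpa using h3
    have h4 : (d : K) * (t : K) = (c : K) := by
      have h2 : (b : K) * ((d : K) * (t : K)) = (b : K) * (c : K) := by
        calc (b : K) * ((d : K) * (t : K)) = ((b : K) * (t : K)) * (d : K) := by ring
        _ = (a : K) * (d : K) := by rw [hab]
        _ = (c : K) * (b : K) := hc'.symm
        _ = (b : K) * (c : K) := by ring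
      exact mul_left_cancel₀ hb0 h2
    rw [h4]
    exact c.2
  -- tensor with T
  have hTinj : Function.Injective (LinearMap.lTensor ↥T φ) :=
    Module.Flat.lTensor_preserves_injective_linearMap φ hφinj
  have h0 : LinearMap.lTensor ↥T φ ((1 : ↥T) ⊗ₜ[↥D] (Submodule.Quotient.mk 1 : ↥D ⧸ J)) = 0 := by
    rw [LinearMap.lTensor_tmul]
    have hφ1 : φ (Submodule.Quotient.mk 1) = (Submodule.Quotient.mk a : ↥D ⧸ bI) := by
      rw [hφ, Submodule.mapQ_apply, s3mulMap_apply, mul_one]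
    rw [hφ1]
    have h1 : (Submodule.Quotient.mk a : ↥D ⧸ bI) = a • (Submodule.Quotient.mk 1 : ↥D ⧸ bI) := by
      rw [← Submodule.Quotient.mk_smul, smul_eq_mul, mul_one]
    rw [h1, TensorProduct.tmul_smul, TensorProduct.smul_tmul']
    have h2 : a • (1 : ↥T) = b • t := by
      rw [Algebra.smul_def, Algebra.smul_def, mul_one]
      exact Subtype.ext hab.symm
    rw [h2, TensorProduct.smul_tmul]
    have h3 : b • (Submodule.Quotient.mk 1 : ↥D ⧸ bI) = 0 := by
      rw [← Submodule.Quotient.mk_smul, smul_eq_mul, mul_one, Submodule.Quotient.mk_eq_zero]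
      exact Ideal.subset_span rfl
    rw [h3, TensorProduct.tmul_zero]
  have he0 : (1 : ↥T) ⊗ₜ[↥D] (Submodule.Quotient.mk 1 : ↥D ⧸ J) = 0 := by
    apply hTinj
    rw [h0, map_zero]
  have hex := lTensor_exact (Q := ↥T) (LinearMap.exact_subtype_mkQ J) (Submodule.mkQ_surjective J)
  have hmem : ((1 : ↥T) ⊗ₜ[↥D] (1 : ↥D)) ∈ Set.range (LinearMap.lTensor ↥T J.subtype) := by
    apply (hex _).mp
    rw [LinearMap.lTensor_tmul]
    exact he0
  obtain ⟨ξ, hξ⟩ := hmem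
  have hone : (TensorProduct.rid ↥D ↥T) ((1 : ↥T) ⊗ₜ[↥D] (1 : ↥D)) = 1 := by
    rw [TensorProduct.rid_tmul, one_smul]
  have hspan : ∀ ζ : TensorProduct ↥D ↥T ↥J,
      (TensorProduct.rid ↥D ↥T) (LinearMap.lTensor ↥T J.subtype ζ) ∈
        Ideal.span {u : ↥T | (u : K) ∈ D ∧ (u : K) * (t : K) ∈ D} := by
    intro ζ
    induction ζ using TensorProduct.induction_on with
    | zero => simp only [map_zero]; exact Ideal.zero_mem _
    | tmul x j =>
      rw [LinearMap.lTensor_tmul, TensorProduct.rid_tmul]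
      have hj : ((j : ↥D) : K) * (t : K) ∈ D := j.2
      have hmemgen : ((Subring.inclusion hDT) (j : ↥D)) ∈
          ({u : ↥T | (u : K) ∈ D ∧ (u : K) * (t : K) ∈ D} : Set ↥T) := ⟨((j : ↥D)).2, hj⟩
      have hsm : ((j : ↥D) • x : ↥T) = x * (Subring.inclusion hDT) (j : ↥D) := by
        rw [Algebra.smul_def]; exact mul_comm _ _
      rw [Submodule.subtype_apply] at *
      rw [hsm]
      exact Ideal.mul_mem_left _ x (Ideal.subset_span hmemgen)
    | add u v hu hv => rw [map_add, map_add]; exact Ideal.add_mem _ hu hv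
  have h1mem : (1 : ↥T) ∈ Ideal.span {u : ↥T | (u : K) ∈ D ∧ (u : K) * (t : K) ∈ D} := by
    rw [← hone, ← hξ]
    exact hspan ξ
  exact (Ideal.eq_top_iff_one _).mpr h1mem

lemma s3_richman_exists {D T : Subring K} (hDT : D ≤ T) [IsFractionRing ↥D K]
    (hflat : SubringFlat D T hDT) (t : ↥T) {M : Ideal ↥T} (hM : M ≠ ⊤) :
    ∃ u : ↥T, u ∉ M ∧ (u : K) ∈ D ∧ (u : K) * (t : K) ∈ D := by
  by_contra h
  push_neg at h
  have hle : Ideal.span {u : ↥T | (u : K) ∈ D ∧ (u : K) * (t : K) ∈ D} ≤ M := by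
    rw [Ideal.span_le]
    intro u hu
    by_contra hnot
    exact (h u hnot hu.1) hu.2
  rw [s3_richman_span hDT hflat t] at hle
  exact hM (top_le_iff.mp hle)

lemma s3_bridge_aux {D T : Subring K} (hDT : D ≤ T) [IsFractionRing ↥D K]
    (hflat : SubringFlat D T hDT) :
    ∀ (m : ℕ) (g : Polynomial K), g.natDegree ≤ m → (∀ c ∈ D, g.eval c ∈ T) →
      ∀ x ∈ T, g.eval x ∈ T := by
  intro m
  induction m with
  | zero =>
    intro g hdeg hval x hx
    rw [Polynomial.eq_C_of_natDegree_le_zero hdeg, Polynomial.eval_C]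
    have h0 := hval 0 D.zero_mem
    rwa [Polynomial.eq_C_of_natDegree_le_zero hdeg, Polynomial.eval_C] at h0
  | succ m ih =>
    intro g hdeg hval x hx
    set W : Ideal ↥T :=
      { carrier := {u : ↥T | (u : K) * g.eval x ∈ T}
        add_mem' := fun {p q} hp hq => by simpa [add_mul] using T.add_mem hp hq
        zero_mem' := by simpa using T.zero_mem
        smul_mem' := fun r w hw => by
          have h1 : ((r : K) * (w : K)) * g.eval x = (r : K) * ((w : K) * g.eval x) := by ring
          simpa [smul_eq_mul, h1] using T.mul_mem r.2 hw } with hW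
    have hWmem : ∀ u : ↥T, u ∈ W ↔ (u : K) * g.eval x ∈ T := fun u => Iff.rfl
    have hgen : {u : ↥T | (u : K) ∈ D ∧ (u : K) * ((⟨x, hx⟩ : ↥T) : K) ∈ D} ⊆
        (W.radical : Set ↥T) := by
      intro u hu
      obtain ⟨huD, huxD⟩ := hu
      set d : K := (u : K) with hd
      set q : Polynomial K :=
        ∑ k ∈ Finset.range (m + 2), Polynomial.C (g.coeff k * (d ^ k - d ^ (m + 1))) *
          Polynomial.X ^ k with hq
      have heval : ∀ y : K, q.eval y = g.eval (d * y) - d ^ (m + 1) * g.eval y := by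
        intro y
        have h1 : g.eval (d * y) = ∑ k ∈ Finset.range (m + 2), g.coeff k * (d * y) ^ k :=
          Polynomial.eval_eq_sum_range' (lt_of_le_of_lt hdeg (Nat.lt_succ_self _)) _
        have h2 : g.eval y = ∑ k ∈ Finset.range (m + 2), g.coeff k * y ^ k :=
          Polynomial.eval_eq_sum_range' (lt_of_le_of_lt hdeg (Nat.lt_succ_self _)) _
        rw [hq, Polynomial.eval_finset_sum]
        simp only [Polynomial.eval_mul, Polynomial.eval_C, Polynomial.eval_pow,
          Polynomial.eval_X]
        rw [h1, h2, Finset.mul_sum, ← Finset.sum_sub_distrib]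
        apply Finset.sum_congr rfl
        intro k _
        rw [mul_pow]
        ring
      have hqdeg : q.natDegree ≤ m := by
        have hzero : Polynomial.C (g.coeff (m + 1) * (d ^ (m + 1) - d ^ (m + 1))) *
            Polynomial.X ^ (m + 1) = 0 := by
          rw [sub_self, mul_zero, Polynomial.C_0, zero_mul]
        rw [hq, Finset.sum_range_succ, hzero, add_zero]
        apply Polynomial.natDegree_sum_le_of_forall_le
        intro k hk
        exact le_trans (Polynomial.natDegree_C_mul_X_pow_le _ _)
          (Nat.lt_succ_iff.mp (Finset.mem_range.mp hk))
      have hqval : ∀ c ∈ D, q.eval c ∈ T := by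
        intro c hc
        rw [heval c]
        apply T.sub_mem
        · exact hval (d * c) (D.mul_mem huD hc)
        · exact T.mul_mem (hDT (D.pow_mem huD (m + 1))) (hval c hc)
      have hqx := ih q hqdeg hqval x hx
      rw [heval x] at hqx
      have hdx : g.eval (d * x) ∈ T := hval (d * x) huxD
      have hpow : d ^ (m + 1) * g.eval x ∈ T := by
        have h5 := T.sub_mem hdx hqx
        simpa using h5
      refine ⟨m + 1, ?_⟩
      rw [hWmem]
      push_cast
      exact hpow
    have hrad : Ideal.span {u : ↥T | (u : K) ∈ D ∧ (u : K) * ((⟨x, hx⟩ : ↥T) : K) ∈ D} ≤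
        W.radical := Ideal.span_le.mpr hgen
    rw [s3_richman_span hDT hflat ⟨x, hx⟩] at hrad
    have h1W : (1 : ↥T) ∈ W.radical := hrad trivial
    obtain ⟨n, hn⟩ := Ideal.mem_radical_iff.mp h1W
    rw [one_pow] at hn
    have h6 := (hWmem 1).mp hn
    simpa using h6

/-- The bridge lemma: if `T` is a flat overring of `D` and `g(D) ⊆ T`, then `g(T) ⊆ T`. -/
lemma s3_bridge {D T : Subring K} (hDT : D ≤ T) [IsFractionRing ↥D K]
    (hflat : SubringFlat D T hDT) (g : Polynomial K) (hval : ∀ c ∈ D, g.eval c ∈ T) :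
    ∀ x ∈ T, g.eval x ∈ T :=
  s3_bridge_aux hDT hflat g.natDegree g le_rfl hval

lemma s3_mem_condIdeal {D : Subring K} {f : Polynomial K} {d : ↥D} :
    d ∈ condIdeal D f ↔ ∀ c ∈ D, (d : K) * f.eval c ∈ D := Iff.rfl

lemma s3_mem_condIdealT {D T : Subring K} {f : Polynomial K} {t : ↥T} :
    t ∈ condIdealT D T f ↔ ∀ c ∈ D, (t : K) * f.eval c ∈ T := Iff.rfl

end Statement3Aux

/-- Let `D` be an integral domain with quotient field `K` and let `T` be a flat
overring of `D`. Then `Int(D)T = Int(T)` if and only if, for every `f ∈ K[X]`,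
`(D :_D f(D))T = (T :_T f(D)T)`. -/
theorem statement3 {K : Type*} [Field K] (D : Subring K) [IsFractionRing ↥D K]
    (T : Subring K) (hDT : D ≤ T) (hflat : SubringFlat D T hDT) :
    intMul D T = intPoly T ↔
      ∀ f : Polynomial K,
        Ideal.map (Subring.inclusion hDT) (condIdeal D f) = condIdealT D T f := by
  constructor
  · -- `Int(D)T = Int(T)` implies the conductor condition
    intro hEq f
    apply le_antisymm
    · rw [Ideal.map_le_iff_le_comap]
      intro d hd
      rw [Ideal.mem_comap, s3_mem_condIdealT]
      intro c hc
      exact hDT (hd c hc)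
    · intro t ht
      rw [s3_mem_condIdealT] at ht
      by_contra hnot
      set Im : Ideal ↥T := Ideal.map (Subring.inclusion hDT) (condIdeal D f) with hIm
      set Q : Ideal ↥T := Im.colon (Ideal.span {t}) with hQdef
      have hQne : Q ≠ ⊤ := by
        intro htop
        apply hnot
        have h1 : (1 : ↥T) ∈ Q := htop ▸ Submodule.mem_top
        have h2 := Ideal.mem_colon_span_singleton.mp h1
        rwa [one_mul] at h2
      obtain ⟨M, hMmax, hQM⟩ := Ideal.exists_le_maximal Q hQne
      -- the polynomial t·f is integer-valued on T
      set g : Polynomial K := Polynomial.C (t : K) * f with hg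
      have hgval : ∀ c ∈ D, g.eval c ∈ T := by
        intro c hc
        rw [hg, Polynomial.eval_mul, Polynomial.eval_C]
        exact ht c hc
      have hgT : g ∈ intPoly T := by
        rw [mem_intPoly]
        exact s3_bridge hDT hflat g hgval
      have hgMul : g ∈ Submodule.span ↥T ((intPoly D : Set (Polynomial K))) := by
        rw [← mem_intMul, hEq]
        exact hgT
      -- extract a denominator outside M
      have hclaim : ∀ h : Polynomial K,
          h ∈ Submodule.span ↥T ((intPoly D : Set (Polynomial K))) →
          ∃ s : ↥T, s ∉ M ∧ (s : K) ∈ D ∧ ∀ c ∈ D, (s : K) * h.eval c ∈ D := by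
        have h1M : (1 : ↥T) ∉ M := fun h1 => hMmax.ne_top ((Ideal.eq_top_iff_one M).mpr h1)
        intro h hh
        induction hh using Submodule.span_induction with
        | mem p hp =>
          exact ⟨1, h1M, D.one_mem, fun c hc => by simpa using hp c hc⟩
        | zero =>
          exact ⟨1, h1M, D.one_mem, fun c hc => by simpa using D.zero_mem⟩
        | add p q _ _ hip hiq =>
          obtain ⟨s1, hs1M, hs1D, hs1val⟩ := hip
          obtain ⟨s2, hs2M, hs2D, hs2val⟩ := hiq
          refine ⟨s1 * s2, fun hmem => ?_, D.mul_mem hs1D hs2D, fun c hc => ?_⟩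
          · rcases hMmax.isPrime.mem_or_mem hmem with h' | h'
            exacts [hs1M h', hs2M h']
          · have heq : ((s1 * s2 : ↥T) : K) * (p + q).eval c =
                (s2 : K) * ((s1 : K) * p.eval c) + (s1 : K) * ((s2 : K) * q.eval c) := by
              push_cast
              rw [Polynomial.eval_add]
              ring
            rw [heq]
            exact D.add_mem (D.mul_mem hs2D (hs1val c hc)) (D.mul_mem hs1D (hs2val c hc))
        | smul u p _ hip =>
          obtain ⟨s, hsM, hsD, hsval⟩ := hip
          obtain ⟨r, hrM, hrD, hruD⟩ := s3_richman_exists hDT hflat u hMmax.ne_top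
          refine ⟨r * s, fun hmem => ?_, D.mul_mem hrD hsD, fun c hc => ?_⟩
          · rcases hMmax.isPrime.mem_or_mem hmem with h' | h'
            exacts [hrM h', hsM h']
          · have heq : ((r * s : ↥T) : K) * (u • p).eval c =
                ((r : K) * (u : K)) * ((s : K) * p.eval c) := by
              rw [smul_poly_eq_C_mul, Polynomial.eval_mul, Polynomial.eval_C]
              push_cast
              ring
            rw [heq]
            exact D.mul_mem hruD (hsval c hc)
      obtain ⟨s, hsM, hsD, hsval⟩ := hclaim g hgMul
      obtain ⟨s', hs'M, hs'D, hs'tD⟩ := s3_richman_exists hDT hflat t hMmax.ne_top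
      have hd0mem : (s : K) * ((s' : K) * (t : K)) ∈ D := D.mul_mem hsD hs'tD
      set d0 : ↥D := ⟨(s : K) * ((s' : K) * (t : K)), hd0mem⟩ with hd0
      have hd0cond : d0 ∈ condIdeal D f := by
        rw [s3_mem_condIdeal]
        intro c hc
        have heq : (d0 : K) * f.eval c = (s' : K) * ((s : K) * g.eval c) := by
          rw [hg, Polynomial.eval_mul, Polynomial.eval_C, hd0]
          ring
        rw [heq]
        exact D.mul_mem hs'D (hsval c hc)
      have hinc : (Subring.inclusion hDT) d0 = (s * s') * t := by
        apply Subtype.ext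
        show (s : K) * ((s' : K) * (t : K)) = ((s * s' * t : ↥T) : K)
        push_cast
        ring
      have hw : s * s' ∈ Q := by
        rw [hQdef]
        rw [Ideal.mem_colon_span_singleton]
        rw [← hinc]
        exact Ideal.mem_map_of_mem _ hd0cond
      rcases hMmax.isPrime.mem_or_mem (hQM hw) with h' | h'
      exacts [hsM h', hs'M h']
  · -- the conductor condition implies `Int(D)T = Int(T)`
    intro hR
    apply SetLike.ext
    intro p
    constructor
    · -- Int(D)T ⊆ Int(T), using only flatness
      intro hp
      rw [mem_intMul] at hp
      set PT : Submodule ↥T (Polynomial K) :=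
        { carrier := {h : Polynomial K | ∀ x ∈ T, h.eval x ∈ T}
          add_mem' := fun {h1 h2} hh1 hh2 x hx => by
            rw [Polynomial.eval_add]
            exact T.add_mem (hh1 x hx) (hh2 x hx)
          zero_mem' := fun x hx => by simpa using T.zero_mem
          smul_mem' := fun u h hh x hx => by
            rw [smul_poly_eq_C_mul, Polynomial.eval_mul, Polynomial.eval_C]
            exact T.mul_mem u.2 (hh x hx) } with hPT
      have hle : Submodule.span ↥T ((intPoly D : Set (Polynomial K))) ≤ PT := by
        rw [Submodule.span_le]
        intro h hh
        exact s3_bridge hDT hflat h (fun c hc => hDT (hh c hc))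
      rw [mem_intPoly]
      exact hle hp
    · -- Int(T) ⊆ Int(D)T, using the conductor condition
      intro hp
      rw [mem_intPoly] at hp
      have h1T : (1 : ↥T) ∈ condIdealT D T p := by
        rw [s3_mem_condIdealT]
        intro c hc
        rw [OneMemClass.coe_one, one_mul]
        exact hp c (hDT hc)
      rw [← hR p] at h1T
      set Z : Ideal ↥T :=
        { carrier := {u : ↥T | Polynomial.C (u : K) * p ∈ intMul D T}
          add_mem' := fun {u v} hu hv => by
            have heq : Polynomial.C ((u + v : ↥T) : K) * p =
                Polynomial.C (u : K) * p + Polynomial.C (v : K) * p := by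
              push_cast
              rw [Polynomial.C_add, add_mul]
            rw [Set.mem_setOf_eq, heq]
            exact add_mem hu hv
          zero_mem' := by
            have heq : Polynomial.C ((0 : ↥T) : K) * p = 0 := by
              rw [ZeroMemClass.coe_zero, Polynomial.C_0, zero_mul]
            rw [Set.mem_setOf_eq, heq]
            exact zero_mem (intMul D T)
          smul_mem' := fun r u hu => by
            have heq : Polynomial.C ((r • u : ↥T) : K) * p =
                Polynomial.C (r : K) * (Polynomial.C (u : K) * p) := by
              rw [smul_eq_mul]
              push_cast
              rw [Polynomial.C_mul]
              ring
            rw [Set.mem_setOf_eq, heq]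
            exact mul_mem (C_mem_intMul D T r) hu } with hZ
      have hmapZ : Ideal.map (Subring.inclusion hDT) (condIdeal D p) ≤ Z := by
        rw [Ideal.map_le_iff_le_comap]
        intro d hd
        rw [Ideal.mem_comap]
        show Polynomial.C (((Subring.inclusion hDT) d : ↥T) : K) * p ∈ intMul D T
        have hdK : (((Subring.inclusion hDT) d : ↥T) : K) = (d : K) := rfl
        rw [hdK]
        apply intPoly_le_intMul D T
        rw [mem_intPoly]
        intro c hc
        rw [Polynomial.eval_mul, Polynomial.eval_C]
        exact hd c hc
      have h1Z : (1 : ↥T) ∈ Z := hmapZ h1T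
      have hfin : Polynomial.C ((1 : ↥T) : K) * p ∈ intMul D T := h1Z
      rwa [OneMemClass.coe_one, Polynomial.C_1, one_mul] at hfin
end

section
/- Let D be an integral domain with quotient field K and let T be a t-Jaffard overring of D. Then for every nonzero fractional ideal I of D one has (D : I)T = (T : IT), where (D : I) := {x ∈ K : xI ⊆ D}, (D : I)T denotes the T-submodule of K generated by (D : I), IT denotes the T-submodule of K generated by I, and (T : IT) := {x ∈ K : x·IT ⊆ T}. -/
open Polynomial

section Statement4Aux

open Pointwise

universe u

variable {K : Type u} [Field K]

lemma st4_mem_span_mul {T : Subring K} {s s' : Set K} {z w : K}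
    (hz : z ∈ Submodule.span ↥T s) (hw : w ∈ Submodule.span ↥T s') :
    z * w ∈ Submodule.span ↥T (s * s') := by
  induction hz using Submodule.span_induction with
  | mem a ha =>
    induction hw using Submodule.span_induction with
    | mem b hb => exact Submodule.subset_span (Set.mul_mem_mul ha hb)
    | zero => simpa using Submodule.zero_mem _
    | add b c _ _ hb hc => rw [mul_add]; exact Submodule.add_mem _ hb hc
    | smul t b _ hb => rw [mul_smul_comm]; exact Submodule.smul_mem _ t hb
  | zero => simpa using Submodule.zero_mem _
  | add a b _ _ ha hb => rw [add_mul]; exact Submodule.add_mem _ ha hb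
  | smul t a _ ha => rw [smul_mul_assoc]; exact Submodule.smul_mem _ t ha

/-- Richman's criterion-style consequence of flatness: for a flat overring `T` of `D`
and `t ∈ T`, the conductor `(D :_D t)` generates the unit ideal of `T`. -/
lemma st4_richman (D T : Subring K) [IsFractionRing ↥D K] (hle : D ≤ T)
    (hflat : SubringFlat D T hle) {t : K} (ht : t ∈ T) :
    1 ∈ Submodule.span ↥T {d : K | d ∈ D ∧ d * t ∈ D} := by
  letI : Algebra ↥D ↥T := (Subring.inclusion hle).toAlgebra
  haveI : Module.Flat ↥D ↥T := hflat
  obtain ⟨⟨p, q⟩, hpq⟩ := IsLocalization.surj (nonZeroDivisors ↥D) (S := K) t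
  have hq0 : ((q : ↥D) : K) ≠ 0 := by
    intro h
    exact nonZeroDivisors.ne_zero q.2 (Subtype.ext h)
  have hqt : t * ((q : ↥D) : K) = ((p : ↥D) : K) := hpq
  obtain ⟨F, X, hF0, hF1, hX0, hX1⟩ :
      ∃ (F : ULift.{u} (Fin 2) → ↥D) (X : ULift.{u} (Fin 2) → ↥T),
        F ⟨0⟩ = (q : ↥D) ∧ F ⟨1⟩ = -p ∧ X ⟨0⟩ = ⟨t, ht⟩ ∧ X ⟨1⟩ = 1 :=
    ⟨fun i => if i.down = 0 then (q : ↥D) else -p,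
     fun i => if i.down = 0 then ⟨t, ht⟩ else 1, rfl, rfl, rfl, rfl⟩
  have hsmul : ∀ (d : ↥D) (τ : ↥T), ((d • τ : ↥T) : K) = (d : K) * (τ : K) := by
    intro d τ
    rw [Algebra.smul_def]
    rfl
  have hulift : ∀ (M : Type u) (_ : AddCommMonoid M) (f : ULift.{u} (Fin 2) → M),
      ∑ i, f i = f ⟨0⟩ + f ⟨1⟩ := by
    intro M _ f
    rw [Fintype.sum_equiv Equiv.ulift f (fun i => f ⟨i⟩) (fun i => rfl), Fin.sum_univ_two]
  have hrel : ∑ i, F i • X i = 0 := by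
    apply Subtype.ext
    rw [AddSubmonoidClass.coe_finset_sum, hulift _ _ (fun i => ((F i • X i : ↥T) : K)),
      hsmul, hsmul, hF0, hF1, hX0, hX1]
    push_cast
    linear_combination hqt
  obtain ⟨κ, a, y, hxy, hfa⟩ :=
    @Module.Flat.isTrivialRelation_of_sum_smul_eq_zero ↥D ↥T _ _ _ ‹Module.Flat ↥D ↥T›
      (ULift.{u} (Fin 2)) _ F X hrel
  have hone : (1 : K) = ∑ j, (y j) • ((a ⟨1⟩ j : ↥D) : K) := by
    have h2 := congrArg (fun τ : ↥T => (τ : K)) (hxy ⟨1⟩)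
    rw [hX1] at h2
    rw [AddSubmonoidClass.coe_finset_sum, OneMemClass.coe_one] at h2
    rw [h2]
    apply Finset.sum_congr rfl
    intro j _
    rw [hsmul, Subring.smul_def, smul_eq_mul, mul_comm]
  rw [hone]
  apply Submodule.sum_mem
  intro j _
  apply Submodule.smul_mem
  apply Submodule.subset_span
  refine ⟨(a ⟨1⟩ j).2, ?_⟩
  have hfa' := congrArg (fun d : ↥D => (d : K)) (hfa j)
  rw [AddSubmonoidClass.coe_finset_sum] at hfa'
  rw [hulift _ _ (fun i => ((F i * a i j : ↥D) : K))] at hfa'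
  rw [hF0, hF1] at hfa'
  have key : ((a ⟨1⟩ j : ↥D) : K) * t = ((a ⟨0⟩ j : ↥D) : K) := by
    apply mul_left_cancel₀ hq0
    push_cast at hfa'
    linear_combination ((a ⟨1⟩ j : ↥D) : K) * hqt - hfa'
  rw [key]
  exact (a ⟨0⟩ j).2

/-- For distinct members `T, S` of a t-Jaffard family and any `u ∈ K`, the ideal
`{d ∈ D : d u ∈ S}` generates the unit ideal of `T`. -/
lemma st4_coprime (D : Subring K) [IsFractionRing ↥D K] {Θ : Set (Subring K)}
    (hfam : IsTJaffardFamily D Θ) {T S : Subring K} (hTm : T ∈ Θ) (hSm : S ∈ Θ)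
    (hne : T ≠ S) (u : K) :
    1 ∈ Submodule.span ↥T {d : K | d ∈ D ∧ d * u ∈ S} := by
  have hDS : D ≤ S := hfam.le S hSm
  have hDT : D ≤ T := hfam.le T hTm
  have hu : u ∈ Subring.closure ((T : Set K) ∪ (S : Set K)) := by
    rw [Subring.closure_union, Subring.closure_eq, Subring.closure_eq,
      hfam.independent T hTm S hSm hne]
    exact Subring.mem_top u
  induction hu using Subring.closure_induction with
  | mem z hz =>
    rcases hz with hz | hz
    · refine Submodule.span_mono ?_ (st4_richman D T hDT (hfam.flat T hTm) hz)
      rintro d ⟨hd1, hd2⟩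
      exact ⟨hd1, hDS hd2⟩
    · exact Submodule.subset_span ⟨one_mem D, by rwa [one_mul]⟩
  | zero => exact Submodule.subset_span ⟨one_mem D, by rw [one_mul]; exact zero_mem S⟩
  | one => exact Submodule.subset_span ⟨one_mem D, by rw [one_mul]; exact one_mem S⟩
  | add x y hx hy px py =>
    have h := st4_mem_span_mul px py
    rw [one_mul] at h
    refine Submodule.span_mono ?_ h
    rintro _ ⟨d, hd, e, he, rfl⟩
    refine ⟨mul_mem hd.1 he.1, ?_⟩
    have heq : d * e * (x + y) = e * (d * x) + d * (e * y) := by ring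
    rw [heq]
    exact add_mem (mul_mem (hDS he.1) hd.2) (mul_mem (hDS hd.1) he.2)
  | neg x hx px =>
    refine Submodule.span_mono ?_ px
    rintro d ⟨hd1, hd2⟩
    exact ⟨hd1, by rw [mul_neg]; exact neg_mem hd2⟩
  | mul x y hx hy px py =>
    have h := st4_mem_span_mul px py
    rw [one_mul] at h
    refine Submodule.span_mono ?_ h
    rintro _ ⟨d, hd, e, he, rfl⟩
    refine ⟨mul_mem hd.1 he.1, ?_⟩
    have heq : d * e * (x * y) = (d * x) * (e * y) := by ring
    rw [heq]
    exact mul_mem hd.2 he.2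

lemma st4_finset (D : Subring K) [IsFractionRing ↥D K] {Θ : Set (Subring K)}
    (hfam : IsTJaffardFamily D Θ) {T : Subring K} (hTm : T ∈ Θ) (u : K)
    (F : Finset (Subring K)) (hF : ∀ S ∈ F, S ∈ Θ ∧ S ≠ T) :
    1 ∈ Submodule.span ↥T {d : K | d ∈ D ∧ ∀ S ∈ F, d * u ∈ S} := by
  classical
  induction F using Finset.induction_on with
  | empty => exact Submodule.subset_span ⟨one_mem D, by simp⟩
  | @insert S₀ F hS₀F ih =>
    have hS₀ := hF S₀ (Finset.mem_insert_self S₀ F)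
    have h0 := st4_coprime D hfam hTm hS₀.1 (Ne.symm hS₀.2) u
    have h1 := ih (fun S hS => hF S (Finset.mem_insert_of_mem hS))
    have h := st4_mem_span_mul h0 h1
    rw [one_mul] at h
    refine Submodule.span_mono ?_ h
    rintro _ ⟨d, hd, e, he, rfl⟩
    refine ⟨mul_mem hd.1 he.1, ?_⟩
    intro S hS
    rcases Finset.mem_insert.mp hS with rfl | hS
    · have heq : d * e * u = e * (d * u) := by ring
      rw [heq]
      exact mul_mem (hfam.le S hS₀.1 he.1) hd.2
    · have heq : d * e * u = d * (e * u) := by ring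
      rw [heq]
      exact mul_mem (hfam.le S (hF S (Finset.mem_insert_of_mem hS)).1 hd.1) (he.2 S hS)

/-- Multiplication by a fixed element of `K`, as a `T`-linear endomorphism of `K`. -/
def st4_mulLin (T : Subring K) (a : K) : K →ₗ[↥T] K where
  toFun z := a * z
  map_add' z w := mul_add a z w
  map_smul' t z := by
    simp only [RingHom.id_apply]
    rw [Subring.smul_def, Subring.smul_def, smul_eq_mul, smul_eq_mul]
    ring

/-- The subring `T`, as a `T`-submodule of `K`. -/
def st4_sub (T : Subring K) : Submodule ↥T K where
  carrier := T
  add_mem' := fun h1 h2 => add_mem h1 h2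
  zero_mem' := zero_mem T
  smul_mem' := fun t z hz => by
    rw [Subring.smul_def, smul_eq_mul]
    exact mul_mem t.2 hz

end Statement4Aux

section Statement4Main

open Pointwise

/-- Let `D` be an integral domain with quotient field `K` and let `T` be a
t-Jaffard overring of `D`. Then for every nonzero fractional ideal `I` of `D` one has
`(D : I)T = (T : IT)`. -/
theorem statement4 {K : Type*} [Field K] (D : Subring K) [IsFractionRing ↥D K]
    (T : Subring K) (hT : IsTJaffardOverring D T)
    (I : Submodule ↥D K) (hI : I ≠ ⊥) (hfrac : ∃ x : K, x ≠ 0 ∧ ∀ y ∈ I, x * y ∈ D) :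
    (Submodule.span ↥T {x : K | ∀ y ∈ I, x * y ∈ D} : Set K) =
      {x : K | ∀ y ∈ Submodule.span ↥T (I : Set K), x * y ∈ T} := by
  classical
  obtain ⟨Θ, hfam, hTm⟩ := hT
  obtain ⟨a, ha0, haI⟩ := hfrac
  have hDT : D ≤ T := hfam.le T hTm
  apply Set.eq_of_subset_of_subset
  · -- easy inclusion: (D : I)T ⊆ (T : IT)
    intro x hx
    rw [SetLike.mem_coe] at hx
    rw [Set.mem_setOf_eq]
    intro y hy
    have h := st4_mem_span_mul hx hy
    have hsub : ({x : K | ∀ y ∈ I, x * y ∈ D} * (I : Set K)) ⊆ (st4_sub T : Set K) := by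
      rintro _ ⟨d, hd, e, he, rfl⟩
      exact hDT (hd e he)
    exact Submodule.span_le.mpr hsub h
  · -- hard inclusion: (T : IT) ⊆ (D : I)T
    intro x hx
    rw [Set.mem_setOf_eq] at hx
    have hx' : ∀ y ∈ I, x * y ∈ T := fun y hy => hx y (Submodule.subset_span hy)
    obtain ⟨⟨p, q⟩, hpq⟩ := IsLocalization.surj (nonZeroDivisors ↥D) (S := K) (x * a⁻¹)
    have hq0 : ((q : ↥D) : K) ≠ 0 := by
      intro h
      exact nonZeroDivisors.ne_zero q.2 (Subtype.ext h)
    have hqu : (x * a⁻¹) * ((q : ↥D) : K) = ((p : ↥D) : K) := hpq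
    have hfin := hfam.locallyFinite ((q : ↥D) : K) (q : ↥D).2 hq0
    set B : Finset (Subring K) := hfin.toFinset.erase T with hB
    have hgood : ∀ S ∈ Θ, S ≠ T → S ∉ B → x * a⁻¹ ∈ S := by
      intro S hSm hST hSB
      have hnot : S ∉ hfin.toFinset := fun h => hSB (Finset.mem_erase.mpr ⟨hST, h⟩)
      rw [Set.Finite.mem_toFinset] at hnot
      simp only [Set.mem_setOf_eq, not_and, not_not] at hnot
      obtain ⟨y₀, hy₀S, hy₀⟩ := hnot hSm
      have heq : x * a⁻¹ = ((p : ↥D) : K) * y₀ := by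
        calc x * a⁻¹ = (x * a⁻¹) * (((q : ↥D) : K) * y₀) := by rw [hy₀, mul_one]
        _ = ((x * a⁻¹) * ((q : ↥D) : K)) * y₀ := by ring
        _ = ((p : ↥D) : K) * y₀ := by rw [hqu]
      rw [heq]
      exact mul_mem (hfam.le S hSm (p : ↥D).2) hy₀S
    have hBcond : ∀ S ∈ B, S ∈ Θ ∧ S ≠ T := by
      intro S hS
      rw [hB, Finset.mem_erase, Set.Finite.mem_toFinset] at hS
      exact ⟨hS.2.1, hS.1⟩
    have h1 := st4_finset D hfam hTm (x * a⁻¹) B hBcond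
    have hsub : {d : K | d ∈ D ∧ ∀ S ∈ B, d * (x * a⁻¹) ∈ S} ⊆
        {d : K | d ∈ D ∧ ∀ y ∈ I, (x * d) * y ∈ D} := by
      rintro d ⟨hdD, hdB⟩
      refine ⟨hdD, ?_⟩
      intro y hy
      rw [hfam.inter ((x * d) * y)]
      intro S hSm
      by_cases hST : S = T
      · subst hST
        have heq : x * d * y = d * (x * y) := by ring
        rw [heq]
        exact mul_mem (hfam.le S hSm hdD) (hx' y hy)
      · by_cases hSB : S ∈ B
        · have heq : x * d * y = (d * (x * a⁻¹)) * (a * y) := by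
            field_simp
          rw [heq]
          exact mul_mem (hdB S hSB) (hfam.le S hSm (haI y hy))
        · have hus := hgood S hSm hST hSB
          have heq : x * d * y = d * ((x * a⁻¹) * (a * y)) := by
            field_simp
          rw [heq]
          exact mul_mem (hfam.le S hSm hdD) (mul_mem hus (hfam.le S hSm (haI y hy)))
    have h2 : (1 : K) ∈ Submodule.span ↥T {d : K | d ∈ D ∧ ∀ y ∈ I, (x * d) * y ∈ D} :=
      Submodule.span_mono hsub h1
    have h3 : x ∈ Submodule.map (st4_mulLin T x)
        (Submodule.span ↥T {d : K | d ∈ D ∧ ∀ y ∈ I, (x * d) * y ∈ D}) :=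
      ⟨1, h2, mul_one x⟩
    rw [Submodule.map_span] at h3
    rw [SetLike.mem_coe]
    refine Submodule.span_mono ?_ h3
    rintro _ ⟨d, ⟨hdD, hdP⟩, rfl⟩
    intro y hy
    exact hdP y hy

end Statement4Main
end
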